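/- arXiv:1703.07477 — 7 statements merged into one kernel-verified Lean document; each statement's English description precedes it below -/
import Mathlib

section
/- The invariant trace form τ on the Clifford algebra C = Cℓ(H, Q), defined by τ(u, v) = Tr(L_{u·v̄}) with v̄ = α(β(v)), is symmetric: τ(u, v) = τ(v, u) for all u, v ∈ C. -/
open CliffordAlgebra

/-- The invariant trace form `τ(u, v) = Tr (L_{u * v̄})` on the Clifford algebra,
where `v̄ = involute (reverse v)` and `L_w` is left multiplication by `w`. -/
noncomputable def invariantTraceForm
    {k : Type*} [Field k]
    {H : Type*} [AddCommGroup H] [Module k H]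
    (Q : QuadraticForm k H) (u v : CliffordAlgebra Q) : k :=
  LinearMap.trace k (CliffordAlgebra Q)
    (LinearMap.mulLeft k (u * involute (reverse v)))

namespace InvTraceAux

variable {k : Type*} [Field k]
variable {H : Type*} [AddCommGroup H] [Module k H]
variable (Q : QuadraticForm k H)

/-- Product of a list of vectors inside the Clifford algebra. -/
def π (l : List H) : CliffordAlgebra Q := (l.map (ι Q)).prod

@[simp] lemma π_nil : π Q ([] : List H) = 1 := rfl

@[simp] lemma π_cons (x : H) (l : List H) : π Q (x :: l) = ι Q x * π Q l := by
  simp [π]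

lemma π_append (l l' : List H) : π Q (l ++ l') = π Q l * π Q l' := by
  simp [π]

/-- Correction terms for commuting a vector across a product of vectors. -/
def corr (x : H) : List H → CliffordAlgebra Q
  | [] => 0
  | y :: m => QuadraticMap.polar Q x y • π Q m - ι Q y * corr x m

/-- Commutation identity: `ι x * π m = (-1)^|m| • (π m * ι x) + corr x m`. -/
lemma ι_mul_π (x : H) (m : List H) :
    ι Q x * π Q m = ((-1 : k) ^ m.length) • (π Q m * ι Q x) + corr Q x m := by
  induction m with
  | nil => simp [corr]
  | cons y m ih =>
    have h1 : ι Q x * ι Q y = algebraMap k _ (QuadraticMap.polar Q x y) - ι Q y * ι Q x :=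
      ι_mul_ι_comm x y
    calc ι Q x * π Q (y :: m)
        = (ι Q x * ι Q y) * π Q m := by rw [π_cons, mul_assoc]
      _ = algebraMap k _ (QuadraticMap.polar Q x y) * π Q m - ι Q y * (ι Q x * π Q m) := by
          rw [h1, sub_mul, mul_assoc]
      _ = ((-1 : k) ^ (y :: m).length) • (π Q (y :: m) * ι Q x) + corr Q x (y :: m) := by
          rw [ih]
          simp only [corr, π_cons, List.length_cons, pow_succ, mul_add, mul_sub,
            mul_smul_comm, mul_assoc, ← Algebra.smul_def]
          module

/-- The set of products of `n` vectors. -/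
def Sset (n : ℕ) : Set (CliffordAlgebra Q) := {a | ∃ l : List H, l.length = n ∧ π Q l = a}

lemma corr_mem_span (x : H) : ∀ (m : List H) (n : ℕ), m.length = n + 1 →
    corr Q x m ∈ Submodule.span k (Sset Q n)
  | [], n, h => by simp at h
  | y :: m, n, h => by
    have hn : m.length = n := by simpa using h
    have h1 : π Q m ∈ Submodule.span k (Sset Q n) :=
      Submodule.subset_span ⟨m, hn, rfl⟩
    have h2 : ι Q y * corr Q x m ∈ Submodule.span k (Sset Q n) := by
      cases m with
      | nil => simp [corr]
      | cons z m' =>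
        have hm : (z :: m').length = m'.length + 1 := rfl
        have hc := corr_mem_span x (z :: m') m'.length hm
        have := Submodule.mem_map_of_mem (f := LinearMap.mulLeft k (ι Q y)) hc
        rw [Submodule.map_span] at this
        refine Submodule.span_mono ?_ this
        rintro _ ⟨a, ⟨l', hl', rfl⟩, rfl⟩
        exact ⟨y :: l', by simp [hl', ← hn, hm], by simp⟩
    rw [corr]
    exact Submodule.sub_mem _ (Submodule.smul_mem _ _ h1) h2

lemma involute_π (l : List H) :
    involute (π Q l) = ((-1 : k) ^ l.length) • π Q l := by
  induction l with
  | nil => simp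
  | cons x m ih =>
    simp only [π_cons, map_mul, involute_ι, ih, List.length_cons, pow_succ]
    rw [mul_smul_comm, neg_mul, mul_comm ((-1 : k) ^ m.length) (-1 : k), mul_smul]
    simp

lemma span_π_top :
    Submodule.span k {a : CliffordAlgebra Q | ∃ l : List H, π Q l = a} = ⊤ := by
  set S : Set (CliffordAlgebra Q) := {a | ∃ l : List H, π Q l = a} with hS
  rw [eq_top_iff]
  rintro a -
  induction a using CliffordAlgebra.induction with
  | algebraMap r =>
    rw [Algebra.algebraMap_eq_smul_one]
    exact Submodule.smul_mem _ _ (Submodule.subset_span ⟨[], rfl⟩)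
  | ι x => exact Submodule.subset_span ⟨[x], by simp⟩
  | mul a b ha hb =>
    have : a * b ∈ Submodule.span k S * Submodule.span k S :=
      Submodule.mul_mem_mul ha hb
    rw [Submodule.span_mul_span] at this
    refine Submodule.span_mono ?_ this
    rintro _ ⟨u, ⟨lu, rfl⟩, w, ⟨lw, rfl⟩, rfl⟩
    exact ⟨lu ++ lw, π_append Q lu lw⟩
  | add a b ha hb => exact Submodule.add_mem _ ha hb

variable [CharZero k]

/-- Main vanishing lemma: a cyclic, parity-invariant linear functional killing `1`
vanishes on the whole Clifford algebra. -/
lemma functional_eq_zero (f : CliffordAlgebra Q →ₗ[k] k)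
    (hcyc : ∀ a b, f (a * b) = f (b * a))
    (hinv : ∀ a, f (involute a) = f a)
    (h1 : f 1 = 0) : f = 0 := by
  have key : ∀ n (l : List H), l.length = n → f (π Q l) = 0 := by
    intro n
    induction n using Nat.strong_induction_on with
    | _ n IH =>
      intro l hl
      rcases Nat.even_or_odd n with he | ho
      · -- even case
        rcases n with _ | n
        · -- n = 0
          cases l with
          | nil => simpa using h1
          | cons x m => simp at hl
        · -- n + 1 even, so n odd, l = x :: m with |m| = n ≥ 1
          have hodd : Odd n := by
            rcases he with ⟨t, ht⟩; exact ⟨t - 1, by omega⟩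
          cases l with
          | nil => exact absurd hl (by simp)
          | cons x m =>
            have hm : m.length = n := by simpa using hl
            have hcorr : f (corr Q x m) = 0 := by
              obtain ⟨j, hj⟩ := hodd
              have hmj : m.length = (2 * j) + 1 := by omega
              have hc := corr_mem_span Q x m (2 * j) hmj
              have hker : Submodule.span k (Sset Q (2 * j)) ≤ LinearMap.ker f := by
                rw [Submodule.span_le]
                rintro a ⟨l', hl', rfl⟩
                exact IH (2 * j) (by omega) l' hl'
              exact hker hc
            have hsign : ((-1 : k) ^ m.length) = -1 := by
              rw [hm]; exact hodd.neg_one_pow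
            have : f (π Q (x :: m)) = - f (π Q (x :: m)) := by
              calc f (π Q (x :: m)) = f (ι Q x * π Q m) := by rw [π_cons]
                _ = ((-1 : k) ^ m.length) * f (π Q m * ι Q x) + f (corr Q x m) := by
                    rw [ι_mul_π, map_add, map_smul, smul_eq_mul]
                _ = - f (ι Q x * π Q m) := by
                    rw [hcorr, hsign, hcyc]; ring
                _ = - f (π Q (x :: m)) := by rw [π_cons]
            have h2 : (2 : k) * f (π Q (x :: m)) = 0 := by linear_combination this
            rcases mul_eq_zero.mp h2 with h | h
            · exact absurd h two_ne_zero
            · exact h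
      · -- odd case: parity
        have h1' : f (π Q l) = ((-1 : k) ^ n) * f (π Q l) := by
          conv_lhs => rw [← hinv (π Q l)]
          rw [involute_π, hl, map_smul, smul_eq_mul]
        rw [ho.neg_one_pow] at h1'
        have h2 : (2 : k) * f (π Q l) = 0 := by linear_combination h1'
        rcases mul_eq_zero.mp h2 with h | h
        · exact absurd h two_ne_zero
        · exact h
  have hker : Submodule.span k {a : CliffordAlgebra Q | ∃ l : List H, π Q l = a}
      ≤ LinearMap.ker f := by
    rw [Submodule.span_le]
    rintro a ⟨l, rfl⟩
    exact key l.length l rfl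
  rw [span_π_top] at hker
  exact LinearMap.ker_eq_top.mp (top_le_iff.mp hker)

/-- The trace functional `a ↦ Tr (L_a)` as a linear map. -/
noncomputable def Tfun : CliffordAlgebra Q →ₗ[k] k :=
  (LinearMap.trace k (CliffordAlgebra Q)).comp (LinearMap.mul k (CliffordAlgebra Q))

lemma Tfun_apply (a : CliffordAlgebra Q) :
    Tfun Q a = LinearMap.trace k (CliffordAlgebra Q) (LinearMap.mulLeft k a) := by
  rfl

lemma Tfun_cyc (a b : CliffordAlgebra Q) : Tfun Q (a * b) = Tfun Q (b * a) := by
  rw [Tfun_apply, Tfun_apply, LinearMap.mulLeft_mul, LinearMap.mulLeft_mul,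
    ← Module.End.mul_eq_comp, ← Module.End.mul_eq_comp, LinearMap.trace_mul_comm]

lemma Tfun_involute (a : CliffordAlgebra Q) : Tfun Q (involute a) = Tfun Q a := by
  let e : CliffordAlgebra Q ≃ₗ[k] CliffordAlgebra Q :=
    LinearEquiv.ofInvolutive (involute (Q := Q)).toLinearMap involute_involute
  have hsymm : ⇑e.symm = ⇑(involute (Q := Q)) := rfl
  have h : LinearMap.mulLeft k (involute a) = e.conj (LinearMap.mulLeft k a) := by
    ext x
    simp only [LinearEquiv.conj_apply, LinearMap.comp_apply, LinearEquiv.coe_coe,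
      LinearMap.mulLeft_apply, hsymm]
    have he : ⇑e = ⇑(involute (Q := Q)) := rfl
    rw [he, map_mul, involute_involute]
  rw [Tfun_apply, Tfun_apply, h, LinearMap.trace_conj']

/-- The conjugation `a ↦ involute (reverse a)` as a linear map. -/
noncomputable def sigma : CliffordAlgebra Q →ₗ[k] CliffordAlgebra Q :=
  (involute (Q := Q)).toLinearMap.comp (reverse (Q := Q))

lemma sigma_apply (a : CliffordAlgebra Q) : sigma Q a = involute (reverse a) := rfl

lemma sigma_mul (a b : CliffordAlgebra Q) : sigma Q (a * b) = sigma Q b * sigma Q a := by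
  simp [sigma_apply, reverse.map_mul]

lemma sigma_one : sigma Q (1 : CliffordAlgebra Q) = 1 := by
  simp [sigma_apply]

lemma sigma_involute (a : CliffordAlgebra Q) :
    sigma Q (involute a) = involute (sigma Q a) := by
  simp [sigma_apply, reverse_involute]

lemma sigma_sigma (a : CliffordAlgebra Q) : sigma Q (sigma Q a) = a := by
  simp [sigma_apply, reverse_involute, involute_involute, reverse_reverse]

lemma Tfun_sigma (a : CliffordAlgebra Q) : Tfun Q (sigma Q a) = Tfun Q a := by
  set f : CliffordAlgebra Q →ₗ[k] k := (Tfun Q).comp (sigma Q) - Tfun Q with hf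
  have hzero : f = 0 := by
    apply functional_eq_zero
    · intro a b
      simp only [hf, LinearMap.sub_apply, LinearMap.comp_apply]
      rw [sigma_mul, sigma_mul, Tfun_cyc Q (sigma Q b) (sigma Q a), Tfun_cyc Q a b]
    · intro a
      simp only [hf, LinearMap.sub_apply, LinearMap.comp_apply]
      rw [sigma_involute, Tfun_involute, Tfun_involute]
    · simp [hf, sigma_one]
  have := LinearMap.congr_fun hzero a
  simp only [hf, LinearMap.sub_apply, LinearMap.comp_apply, LinearMap.zero_apply,
    sub_eq_zero] at this
  exact this

end InvTraceAux

/-- The invariant trace form `τ(u, v) = Tr (L_{u·v̄})` on `C = Cℓ(H, Q)`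
is symmetric: `τ(u, v) = τ(v, u)` for all `u, v ∈ C`. -/
theorem invariantTraceForm_symm
    {k : Type*} [Field k] [CharZero k]
    {H : Type*} [AddCommGroup H] [Module k H] [FiniteDimensional k H]
    (Q : QuadraticForm k H)
    (hQ : LinearMap.BilinForm.Nondegenerate (QuadraticMap.polarBilin Q))
    (u v : CliffordAlgebra Q) :
    invariantTraceForm Q u v = invariantTraceForm Q v u := by
  open InvTraceAux in
  have h1 : invariantTraceForm Q u v = Tfun Q (u * sigma Q v) := rfl
  have h2 : invariantTraceForm Q v u = Tfun Q (v * sigma Q u) := rfl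
  rw [h1, h2, ← Tfun_sigma Q (v * sigma Q u), sigma_mul, sigma_sigma]
end

section
/- The invariant trace form τ(u, v) = Tr(L_{u·v̄}) on the Clifford algebra C = Cℓ(H, Q) is nondegenerate: for every u ∈ C with u ≠ 0 there exists v ∈ C with τ(u, v) ≠ 0. -/
open CliffordAlgebra

namespace InvariantTraceFormAux

open scoped symmDiff

variable {k : Type*} [Field k] {H : Type*} [AddCommGroup H] [Module k H]
variable (Q : QuadraticForm k H) {n : ℕ} (e : Fin n → H)

/-- The monomial in the Clifford algebra associated to a list of indices. -/
noncomputable def cMonL (l : List (Fin n)) : CliffordAlgebra Q :=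
  (l.map fun i => ι Q (e i)).prod

@[simp] theorem cMonL_nil : cMonL Q e [] = 1 := rfl

@[simp] theorem cMonL_cons (i : Fin n) (l : List (Fin n)) :
    cMonL Q e (i :: l) = ι Q (e i) * cMonL Q e l := by
  simp [cMonL]

/-- The monomial in the Clifford algebra associated to a finite set of indices. -/
noncomputable def cMon (S : Finset (Fin n)) : CliffordAlgebra Q :=
  cMonL Q e (S.sort (· ≤ ·))

@[simp] theorem cMon_empty : cMon Q e ∅ = 1 := by
  simp [cMon, Finset.sort_empty]

@[simp] theorem cMon_singleton (i : Fin n) : cMon Q e {i} = ι Q (e i) := by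
  simp [cMon, Finset.sort_singleton]

variable {Q e}
variable (horto : ∀ i j : Fin n, i ≠ j → Q.IsOrtho (e i) (e j))

include horto

theorem cMonL_mul_ι (i : Fin n) (l : List (Fin n)) (hl : i ∉ l) :
    cMonL Q e l * ι Q (e i) = ((-1 : k) ^ l.length) • (ι Q (e i) * cMonL Q e l) := by
  induction l with
  | nil => simp
  | cons j l ih =>
    have hji : j ≠ i := fun h => hl (h ▸ List.mem_cons_self)
    have hil : i ∉ l := fun h => hl (List.mem_cons_of_mem _ h)
    rw [cMonL_cons, mul_assoc, ih hil, mul_smul_comm, ← mul_assoc,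
      ι_mul_ι_comm_of_isOrtho (horto j i hji), neg_mul, smul_neg, ← neg_smul, mul_assoc,
      ← cMonL_cons, List.length_cons, pow_succ, mul_neg_one]

theorem cMonL_perm {l l' : List (Fin n)} (h : l.Perm l') (hl : l.Nodup) :
    ∃ c : k, (c = 1 ∨ c = -1) ∧ cMonL Q e l = c • cMonL Q e l' := by
  induction h with
  | nil => exact ⟨1, Or.inl rfl, (one_smul _ _).symm⟩
  | cons x h ih =>
    obtain ⟨c, hc, hEq⟩ := ih (List.Nodup.of_cons hl)
    exact ⟨c, hc, by rw [cMonL_cons, hEq, cMonL_cons, mul_smul_comm]⟩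
  | swap x y l =>
    have hxy : y ≠ x := by
      intro h; exact (List.nodup_cons.mp hl).1 (h ▸ List.mem_cons_self)
    refine ⟨-1, Or.inr rfl, ?_⟩
    rw [cMonL_cons, cMonL_cons, cMonL_cons, cMonL_cons,
      ι_mul_ι_mul_of_isOrtho (cMonL Q e l) (horto y x hxy), neg_smul, one_smul]
  | trans h₁ h₂ ih₁ ih₂ =>
    obtain ⟨c₁, hc₁, hEq₁⟩ := ih₁ hl
    obtain ⟨c₂, hc₂, hEq₂⟩ := ih₂ (h₁.nodup_iff.mp hl)
    refine ⟨c₁ * c₂, ?_, by rw [hEq₁, hEq₂, smul_smul]⟩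
    rcases hc₁ with rfl | rfl <;> rcases hc₂ with rfl | rfl <;> simp

theorem cMonL_sq (hq : ∀ i, Q (e i) ≠ 0) (l : List (Fin n)) (hl : l.Nodup) :
    ∃ c : k, c ≠ 0 ∧ cMonL Q e l * cMonL Q e l = algebraMap k (CliffordAlgebra Q) c := by
  induction l with
  | nil => exact ⟨1, one_ne_zero, by simp⟩
  | cons i l ih =>
    obtain ⟨c, hc, hEq⟩ := ih (List.Nodup.of_cons hl)
    have hil : i ∉ l := (List.nodup_cons.mp hl).1
    refine ⟨(-1 : k) ^ l.length * (Q (e i) * c), ?_, ?_⟩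
    · exact mul_ne_zero (pow_ne_zero _ (neg_ne_zero.mpr one_ne_zero))
        (mul_ne_zero (hq i) hc)
    · rw [cMonL_cons, mul_assoc, ← mul_assoc (cMonL Q e l), cMonL_mul_ι horto i l hil,
        smul_mul_assoc, mul_smul_comm, map_mul, ← Algebra.smul_def]
      congr 1
      rw [map_mul, ← hEq, ← ι_sq_scalar Q (e i)]
      simp only [mul_assoc]

omit horto in
theorem insert_eq_symmDiff {i : Fin n} {A : Finset (Fin n)} (h : i ∉ A) :
    insert i A = {i} ∆ A := by
  ext j
  simp only [Finset.mem_insert, Finset.mem_symmDiff, Finset.mem_singleton]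
  constructor
  · rintro (rfl | hj)
    · exact Or.inl ⟨rfl, h⟩
    · exact Or.inr ⟨hj, fun hji => h (hji ▸ hj)⟩
  · rintro (⟨rfl, -⟩ | ⟨hj, -⟩)
    · exact Or.inl rfl
    · exact Or.inr hj

omit horto in
theorem erase_eq_symmDiff {i : Fin n} {A : Finset (Fin n)} (h : i ∈ A) :
    A.erase i = {i} ∆ A := by
  ext j
  simp only [Finset.mem_erase, Finset.mem_symmDiff, Finset.mem_singleton]
  constructor
  · rintro ⟨hji, hj⟩
    exact Or.inr ⟨hj, hji⟩
  · rintro (⟨rfl, hj⟩ | ⟨hj, hji⟩)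
    · exact absurd h hj
    · exact ⟨hji, hj⟩

theorem ι_mul_cMon (i : Fin n) (S : Finset (Fin n)) :
    ∃ c : k, ι Q (e i) * cMon Q e S = c • cMon Q e ({i} ∆ S) := by
  classical
  by_cases hi : i ∈ S
  · have hperm : (S.sort (· ≤ ·)).Perm (i :: ((S.erase i).sort (· ≤ ·))) := by
      refine (S.sort_perm_toList (· ≤ ·)).trans ?_
      have h1 : (insert i (S.erase i)).toList.Perm (i :: (S.erase i).toList) :=
        Finset.toList_insert (Finset.notMem_erase i S)
      rw [Finset.insert_erase hi] at h1
      exact h1.trans (((S.erase i).sort_perm_toList (· ≤ ·)).symm.cons i)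
    obtain ⟨c, hc, hEq⟩ := cMonL_perm horto hperm (S.sort_nodup (· ≤ ·))
    refine ⟨c * Q (e i), ?_⟩
    rw [cMon, hEq, mul_smul_comm, cMonL_cons, ← mul_assoc, ι_sq_scalar,
      ← Algebra.smul_def, smul_smul, ← erase_eq_symmDiff hi]
    rfl
  · have hperm : (i :: (S.sort (· ≤ ·))).Perm ((insert i S).sort (· ≤ ·)) := by
      have h1 : (insert i S).toList.Perm (i :: S.toList) := Finset.toList_insert hi
      exact (((S.sort_perm_toList (· ≤ ·)).cons i).trans h1.symm).trans
        ((insert i S).sort_perm_toList (· ≤ ·)).symm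
    have hnd : (i :: (S.sort (· ≤ ·))).Nodup :=
      List.nodup_cons.mpr ⟨fun h => hi ((Finset.mem_sort _).1 h), S.sort_nodup _⟩
    obtain ⟨c, hc, hEq⟩ := cMonL_perm horto hperm hnd
    refine ⟨c, ?_⟩
    rw [cMon, ← cMonL_cons, hEq, ← insert_eq_symmDiff hi]
    rfl

theorem cMonL_mul_cMon (l : List (Fin n)) (hl : l.Nodup) (T : Finset (Fin n)) :
    ∃ c : k, cMonL Q e l * cMon Q e T = c • cMon Q e (l.toFinset ∆ T) := by
  classical
  induction l with
  | nil =>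
    refine ⟨1, ?_⟩
    rw [cMonL_nil, one_mul, one_smul, List.toFinset_nil, ← Finset.bot_eq_empty, bot_symmDiff]
  | cons i l ih =>
    obtain ⟨c₁, hEq₁⟩ := ih (List.Nodup.of_cons hl)
    obtain ⟨c₂, hEq₂⟩ := ι_mul_cMon horto i (l.toFinset ∆ T)
    have hil : i ∉ l := (List.nodup_cons.mp hl).1
    refine ⟨c₁ * c₂, ?_⟩
    have hset : (i :: l).toFinset ∆ T = {i} ∆ (l.toFinset ∆ T) := by
      rw [List.toFinset_cons, insert_eq_symmDiff (by simpa using hil), symmDiff_assoc]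
    rw [cMonL_cons, mul_assoc, hEq₁, mul_smul_comm, hEq₂, smul_smul, hset]

theorem cMon_mul_cMon (S T : Finset (Fin n)) :
    ∃ c : k, cMon Q e S * cMon Q e T = c • cMon Q e (S ∆ T) := by
  classical
  obtain ⟨c, hEq⟩ := cMonL_mul_cMon horto (S.sort (· ≤ ·)) (S.sort_nodup (· ≤ ·)) T
  refine ⟨c, ?_⟩
  rwa [Finset.sort_toFinset] at hEq

theorem cMon_sq (hq : ∀ i, Q (e i) ≠ 0) (T : Finset (Fin n)) :
    ∃ c : k, c ≠ 0 ∧ cMon Q e T * cMon Q e T = algebraMap k (CliffordAlgebra Q) c :=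
  cMonL_sq horto hq _ (T.sort_nodup (· ≤ ·))

omit horto in
theorem involute_cMonL (l : List (Fin n)) :
    involute (cMonL Q e l) = ((-1 : k) ^ l.length) • cMonL Q e l := by
  induction l with
  | nil => simp
  | cons i l ih =>
    rw [cMonL_cons, map_mul, involute_ι, ih, List.length_cons, pow_succ,
      neg_mul, mul_smul_comm, mul_neg_one, neg_smul]

omit horto in
theorem span_cMon_top (b : Module.Basis (Fin n) k H)
    (hb : ∀ i j : Fin n, i ≠ j → Q.IsOrtho (b i) (b j)) :
    Submodule.span k (Set.range (cMon Q (⇑b))) = ⊤ := by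
  classical
  rw [eq_top_iff]
  rintro x -
  induction x using CliffordAlgebra.induction with
  | algebraMap r =>
    rw [Algebra.algebraMap_eq_smul_one]
    exact Submodule.smul_mem _ _ (Submodule.subset_span ⟨∅, cMon_empty Q _⟩)
  | ι x =>
    have hx : (ι Q) x = ∑ i, b.repr x i • cMon Q (⇑b) {i} := by
      simp_rw [cMon_singleton]
      conv_lhs => rw [← b.sum_repr x]
      rw [map_sum]
      simp [map_smul]
    rw [hx]
    exact Submodule.sum_mem _ fun i _ =>
      Submodule.smul_mem _ _ (Submodule.subset_span ⟨{i}, rfl⟩)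
  | mul x y hx hy =>
    have hmul : Submodule.span k (Set.range (cMon Q (⇑b))) *
        Submodule.span k (Set.range (cMon Q (⇑b))) ≤
        Submodule.span k (Set.range (cMon Q (⇑b))) := by
      rw [Submodule.span_mul_span]
      refine Submodule.span_le.2 ?_
      rintro z ⟨z₁, ⟨S, rfl⟩, z₂, ⟨T, rfl⟩, rfl⟩
      obtain ⟨c, hEq⟩ := cMon_mul_cMon hb S T
      show cMon Q (⇑b) S * cMon Q (⇑b) T ∈ _
      rw [hEq]
      exact Submodule.smul_mem _ _ (Submodule.subset_span ⟨_, rfl⟩)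
    exact hmul (Submodule.mul_mem_mul hx hy)
  | add x y hx hy => exact Submodule.add_mem _ hx hy

section Trace

variable [CharZero k]

omit horto in
theorem trace_mulLeft_of_anticomm (a b : CliffordAlgebra Q) (h : b * a = -(a * b)) :
    LinearMap.trace k (CliffordAlgebra Q) (LinearMap.mulLeft k (a * b)) = 0 := by
  have h1 : LinearMap.mulLeft k (a * b) = LinearMap.mulLeft k a * LinearMap.mulLeft k b := by
    ext x; simp [mul_assoc]
  have h2 : LinearMap.mulLeft k (b * a) = LinearMap.mulLeft k b * LinearMap.mulLeft k a := by
    ext x; simp [mul_assoc]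
  have hneg : LinearMap.mulLeft k (-(a * b)) = -LinearMap.mulLeft k (a * b) := by
    ext x; simp [mul_assoc]
  have h4 : LinearMap.trace k (CliffordAlgebra Q) (LinearMap.mulLeft k (a * b)) =
      -LinearMap.trace k (CliffordAlgebra Q) (LinearMap.mulLeft k (a * b)) := by
    conv_lhs => rw [h1, LinearMap.trace_mul_comm, ← h2, h, hneg]
    rw [map_neg]
  have h5 := eq_neg_iff_add_eq_zero.mp h4
  have h6 : (2 : k) * LinearMap.trace k (CliffordAlgebra Q) (LinearMap.mulLeft k (a * b)) = 0 := by
    rw [two_mul]; exact h5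
  rcases mul_eq_zero.mp h6 with h | h
  · exact absurd h two_ne_zero
  · exact h

omit horto in
theorem trace_mulLeft_of_involute_neg (w : CliffordAlgebra Q) (h : involute w = -w) :
    LinearMap.trace k (CliffordAlgebra Q) (LinearMap.mulLeft k w) = 0 := by
  set J : CliffordAlgebra Q →ₗ[k] CliffordAlgebra Q :=
    (involute : CliffordAlgebra Q →ₐ[k] CliffordAlgebra Q).toLinearMap with hJdef
  have hJ : J * J = 1 := by
    ext x; simp [hJdef, involute_involute]
  have h1 : LinearMap.mulLeft k (involute w) = J * (LinearMap.mulLeft k w * J) := by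
    ext x
    simp [hJdef, Module.End.mul_eq_comp, map_mul, involute_involute]
  have h2 : LinearMap.trace k (CliffordAlgebra Q) (LinearMap.mulLeft k (involute w)) =
      LinearMap.trace k (CliffordAlgebra Q) (LinearMap.mulLeft k w) := by
    rw [h1, LinearMap.trace_mul_comm, mul_assoc, hJ, mul_one]
  rw [h] at h2
  have hneg : LinearMap.mulLeft k (-w) = -LinearMap.mulLeft k w := by ext x; simp
  rw [hneg, map_neg] at h2
  have h5 := eq_neg_iff_add_eq_zero.mp h2.symm
  have h6 : (2 : k) * LinearMap.trace k (CliffordAlgebra Q) (LinearMap.mulLeft k w) = 0 := by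
    rw [two_mul]; exact h5
  rcases mul_eq_zero.mp h6 with h | h
  · exact absurd h two_ne_zero
  · exact h

theorem trace_mulLeft_cMonL_cons (i : Fin n) (l : List (Fin n)) (hil : i ∉ l) :
    LinearMap.trace k (CliffordAlgebra Q) (LinearMap.mulLeft k (cMonL Q e (i :: l))) = 0 := by
  rcases Nat.even_or_odd l.length with he | ho
  · apply trace_mulLeft_of_involute_neg
    rw [involute_cMonL, List.length_cons, pow_succ, he.neg_one_pow, one_mul, neg_one_smul]
  · rw [cMonL_cons]
    apply trace_mulLeft_of_anticomm
    rw [cMonL_mul_ι horto i l hil, ho.neg_one_pow, neg_one_smul]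

theorem trace_mulLeft_cMon (S : Finset (Fin n)) (hS : S ≠ ∅) :
    LinearMap.trace k (CliffordAlgebra Q) (LinearMap.mulLeft k (cMon Q e S)) = 0 := by
  have hnd := S.sort_nodup (· ≤ ·)
  rcases hl : S.sort (· ≤ ·) with _ | ⟨i, l⟩
  · exfalso
    obtain ⟨x, hx⟩ := Finset.nonempty_iff_ne_empty.mpr hS
    have : x ∈ S.sort (· ≤ ·) := (Finset.mem_sort _).2 hx
    rw [hl] at this
    exact List.not_mem_nil this
  · rw [cMon, hl]
    rw [hl] at hnd
    exact trace_mulLeft_cMonL_cons horto i l (List.nodup_cons.mp hnd).1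

end Trace

end InvariantTraceFormAux

/-- The invariant trace form `τ(u, v) = Tr (L_{u·v̄})` on `C = Cℓ(H, Q)`
is nondegenerate: for every `u ≠ 0` there exists `v` with `τ(u, v) ≠ 0`. -/
theorem invariantTraceForm_nondegenerate
    {k : Type*} [Field k] [CharZero k]
    {H : Type*} [AddCommGroup H] [Module k H] [FiniteDimensional k H]
    (Q : QuadraticForm k H)
    (hQ : LinearMap.BilinForm.Nondegenerate (QuadraticMap.polarBilin Q))
    (u : CliffordAlgebra Q) (hu : u ≠ 0) :
    ∃ v : CliffordAlgebra Q, invariantTraceForm Q u v ≠ 0 := by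
  classical
  open InvariantTraceFormAux in
  haveI : Invertible (2 : k) := invertibleOfNonzero two_ne_zero
  obtain ⟨b, hb⟩ :=
    LinearMap.BilinForm.exists_orthogonal_basis
      (⟨fun x y => QuadraticMap.associated_isSymm k Q x y⟩ :
        (QuadraticMap.associated (R := k) Q).IsSymm)
  -- orthogonality for `Q`
  have horto : ∀ i j : Fin (Module.finrank k H), i ≠ j → Q.IsOrtho (b i) (b j) := by
    intro i j hij
    exact QuadraticMap.associated_isOrtho.mp (hb hij)
  -- the basis vectors are anisotropic
  have hq : ∀ i, Q (b i) ≠ 0 := by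
    intro i hQi
    have hzero : QuadraticMap.polarBilin Q (b i) = 0 := by
      apply b.ext
      intro j
      rcases eq_or_ne i j with rfl | hij
      · simp [QuadraticMap.polarBilin_apply_apply, QuadraticMap.polar_self, hQi]
      · simp [QuadraticMap.polarBilin_apply_apply,
          (horto i j hij).polar_eq_zero]
    exact b.ne_zero i (hQ.1 _ (fun x => by rw [hzero]; rfl))
  -- finite dimensionality of the Clifford algebra
  have hspan := span_cMon_top (Q := Q) b horto
  haveI : Module.Finite k (CliffordAlgebra Q) := by
    refine ⟨Submodule.fg_def.mpr ⟨Set.range (cMon Q (⇑b)), Set.finite_range _, hspan⟩⟩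
  haveI : Nontrivial (CliffordAlgebra Q) := inferInstance
  -- expand u in monomials
  have hu' : u ∈ Submodule.span k (Set.range (cMon Q (⇑b))) := hspan ▸ Submodule.mem_top
  obtain ⟨c, hc⟩ := (Submodule.mem_span_range_iff_exists_fun k).mp hu'
  obtain ⟨T, hT⟩ : ∃ T, c T ≠ 0 := by
    by_contra h
    push_neg at h
    apply hu
    rw [← hc]
    simp [h]
  obtain ⟨d, hd, hdEq⟩ := cMon_sq horto hq T
  refine ⟨reverse (involute (cMon Q (⇑b) T)), ?_⟩
  have hbar : involute (reverse (reverse (involute (cMon Q (⇑b) T)))) = cMon Q (⇑b) T := by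
    rw [reverse_reverse, involute_involute]
  rw [invariantTraceForm, hbar]
  have hsmulL : ∀ (r : k) (w : CliffordAlgebra Q),
      LinearMap.mulLeft k (r • w) = r • LinearMap.mulLeft k w := by
    intro r w; ext x; simp [smul_mul_assoc]
  have hexp : LinearMap.mulLeft k (u * cMon Q (⇑b) T) =
      ∑ S, c S • LinearMap.mulLeft k (cMon Q (⇑b) S * cMon Q (⇑b) T) := by
    ext x
    rw [← hc]
    simp [Finset.sum_mul, smul_mul_assoc, LinearMap.sum_apply, mul_assoc]
  rw [hexp, map_sum, Finset.sum_eq_single T]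
  · -- the diagonal term
    rw [map_smul, hdEq, Algebra.algebraMap_eq_smul_one, hsmulL, map_smul,
      LinearMap.mulLeft_one, smul_eq_mul, smul_eq_mul, LinearMap.trace_id]
    have hrank : (Module.finrank k (CliffordAlgebra Q) : k) ≠ 0 :=
      Nat.cast_ne_zero.mpr Module.finrank_pos.ne'
    exact mul_ne_zero hT (mul_ne_zero hd hrank)
  · intro S _ hST
    obtain ⟨c', hEq⟩ := cMon_mul_cMon horto S T
    have hne : symmDiff S T ≠ ∅ := by
      intro h0
      exact hST (symmDiff_eq_bot.mp (Finset.bot_eq_empty ▸ h0))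
    rw [map_smul, hEq, hsmulL, map_smul, trace_mulLeft_cMon horto _ hne, smul_zero,
      smul_zero]
  · intro h
    exact absurd (Finset.mem_univ T) h
end

section
/- For every x ∈ H the bilinear form ω_x on V is alternating, i.e. ω_x(u, v) = −ω_x(v, u) for all u, v ∈ V; and if moreover Q(x) ≠ 0, then ω_x is nondegenerate: for every u ∈ V with u ≠ 0 there exists v ∈ V with ω_x(u, v) ≠ 0. -/
open CliffordAlgebra

/-- Let `V` be a finite-dimensional module over `C = Cℓ(H, Q)` with a
nondegenerate symmetric `C`-invariant bilinear form `τ`, and for `x ∈ H` let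
`ω_x(u, v) = τ(ι(x)·u, v)`.  Then `ω_x` is alternating for every `x ∈ H`; and if moreover
`Q x ≠ 0`, then `ω_x` is nondegenerate. -/
theorem omega_alternating_and_nondegenerate
    {k : Type*} [Field k] [CharZero k]
    {H : Type*} [AddCommGroup H] [Module k H] [FiniteDimensional k H]
    (Q : QuadraticForm k H)
    (B : LinearMap.BilinForm k H)
    (hBQ : ∀ x, B x x = Q x)
    (hBsymm : ∀ x y, B x y = B y x)
    (hBnd : LinearMap.BilinForm.Nondegenerate B)
    {V : Type*} [AddCommGroup V] [Module k V] [FiniteDimensional k V]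
    [Module (CliffordAlgebra Q) V] [IsScalarTower k (CliffordAlgebra Q) V]
    (τ : LinearMap.BilinForm k V)
    (hτsymm : ∀ u v : V, τ u v = τ v u)
    (hτnd : LinearMap.BilinForm.Nondegenerate τ)
    (hτinv : ∀ (a : CliffordAlgebra Q) (u v : V),
      τ (a • u) v = τ u (involute (reverse a) • v))
    (x : H) :
    (∀ u v : V, τ (ι Q x • u) v = - τ (ι Q x • v) u) ∧
    (Q x ≠ 0 → ∀ u : V, u ≠ 0 → ∃ v : V, τ (ι Q x • u) v ≠ 0) := by
  constructor
  · intro u v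
    rw [hτinv, reverse_ι, involute_ι, neg_smul, map_neg, hτsymm u]
  · intro hQ u hu
    have hιu : ι Q x • u ≠ 0 := by
      intro h
      have h2 : ι Q x • (ι Q x • u) = 0 := by rw [h, smul_zero]
      rw [smul_smul, ι_sq_scalar, algebraMap_smul, smul_eq_zero] at h2
      rcases h2 with h2 | h2
      · exact hQ h2
      · exact hu h2
    by_contra h
    push_neg at h
    exact hιu (hτnd.1 _ h)
end

section
/- Let a ∈ C be invertible with a·ā = 1 (an element of the Pin group of (H, Q)), and let x, y ∈ H satisfy ι(y) = α(a)·ι(x)·a⁻¹ in C. Then for all u, v ∈ V one has ω_y(u, v) = ω_x(a⁻¹·u, α(a)⁻¹·v); that is, the map x ↦ ω_x is equivariant for the Pin-group actions on H and on alternating 2-forms on V. -/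
open CliffordAlgebra

/-- Let `a ∈ C = Cℓ(H, Q)` be invertible (with two-sided inverse `b`) and
satisfy `a·ā = 1` (an element of the Pin group), and let `x, y ∈ H` satisfy
`ι y = α(a)·ι(x)·a⁻¹`.  Then for all `u, v ∈ V` one has
`ω_y(u, v) = ω_x(a⁻¹·u, α(a)⁻¹·v)`, i.e. `x ↦ ω_x` is equivariant for the Pin-group
actions on `H` and on alternating `2`-forms on `V`. -/
theorem omega_pin_equivariant
    {k : Type*} [Field k] [CharZero k]
    {H : Type*} [AddCommGroup H] [Module k H] [FiniteDimensional k H]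
    (Q : QuadraticForm k H)
    (B : LinearMap.BilinForm k H)
    (hBQ : ∀ x, B x x = Q x)
    (hBsymm : ∀ x y, B x y = B y x)
    (hBnd : LinearMap.BilinForm.Nondegenerate B)
    {V : Type*} [AddCommGroup V] [Module k V] [FiniteDimensional k V]
    [Module (CliffordAlgebra Q) V] [IsScalarTower k (CliffordAlgebra Q) V]
    (τ : LinearMap.BilinForm k V)
    (hτsymm : ∀ u v : V, τ u v = τ v u)
    (hτnd : LinearMap.BilinForm.Nondegenerate τ)
    (hτinv : ∀ (a : CliffordAlgebra Q) (u v : V),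
      τ (a • u) v = τ u (involute (reverse a) • v))
    (a b : CliffordAlgebra Q) (hab : a * b = 1) (hba : b * a = 1)
    (hPin : a * involute (reverse a) = 1)
    (x y : H) (hxy : ι Q y = involute a * ι Q x * b) :
    ∀ u v : V, τ (ι Q y • u) v = τ (ι Q x • (b • u)) ((involute b) • v) := by
  intro u v
  have hb : involute (reverse a) = b := by
    have h := congrArg (b * ·) hPin
    simpa [← mul_assoc, hba] using h
  have hra : reverse a = involute b := by rw [← hb, involute_involute]
  rw [hxy, mul_assoc, mul_smul, hτinv, reverse_involute, involute_involute, hra, mul_smul]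
end

section
/- Assume dim_k V = 4n with n ≥ 1. Then for every nonzero alternating 4n-linear form vol on V there exists a constant c ∈ k such that for every x ∈ H the 2n-th wedge power of ω_x satisfies ω_x^{∧2n} = c · Q(x)^n · vol. -/
open CliffordAlgebra

/-- The `m`-th wedge power of a bilinear form `ω` on `V`, as a `2m`-linear expression:
`(ξ₁, …, ξ_{2m}) ↦ Σ_{σ ∈ S_{2m}} sgn σ · Π_{i=1}^{m} ω(ξ_{σ(2i−1)}, ξ_{σ(2i)})`. -/
def wedgePow {k V : Type*} [Field k] [AddCommGroup V] [Module k V]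
    (ω : V → V → k) (m : ℕ) (ξ : Fin (2 * m) → V) : k :=
  ∑ σ : Equiv.Perm (Fin (2 * m)), ((Equiv.Perm.sign σ : ℤ) : k) *
    ∏ i : Fin m,
      ω (ξ (σ ⟨2 * (i : ℕ), by have := i.isLt; omega⟩))
        (ξ (σ ⟨2 * (i : ℕ) + 1, by have := i.isLt; omega⟩))

namespace WedgeAux

variable {k V : Type*} [Field k] [AddCommGroup V] [Module k V]

def eIdx {m : ℕ} (i : Fin m) : Fin (2 * m) := ⟨2 * i.1, by have := i.2; omega⟩
def oIdx {m : ℕ} (i : Fin m) : Fin (2 * m) := ⟨2 * i.1 + 1, by have := i.2; omega⟩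

lemma exists_linear (ω : V →ₗ[k] V →ₗ[k] k) (m : ℕ) [DecidableEq (Fin (2 * m))]
    (η : Fin (2 * m) → V) (j : Fin (2 * m)) :
    ∃ L : V →ₗ[k] k, ∀ x : V,
      (∏ i : Fin m, ω (Function.update η j x (eIdx i)) (Function.update η j x (oIdx i))) = L x := by
  have hj2 : j.1 / 2 < m := Nat.div_lt_of_lt_mul (by omega)
  have hi₀ : (⟨j.1 / 2, hj2⟩ : Fin m).1 = j.1 / 2 := rfl
  set i₀ : Fin m := ⟨j.1 / 2, hj2⟩
  rcases Nat.even_or_odd j.1 with he | ho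
  · -- j = eIdx i₀
    obtain ⟨a, ha⟩ := he
    have hje : j = eIdx i₀ := by
      apply Fin.ext
      have hv : (eIdx i₀).val = 2 * (j.1 / 2) := rfl
      rw [hv]; omega
    have hne : ∀ i : Fin m, oIdx i ≠ j := by
      intro i h
      have h2 : 2 * i.1 + 1 = j.1 := congrArg Fin.val h
      omega
    have hne' : oIdx i₀ ≠ eIdx i₀ := by
      intro h
      have h2 : 2 * (j.1 / 2) + 1 = 2 * (j.1 / 2) := congrArg Fin.val h
      omega
    have hee : ∀ i : Fin m, i ≠ i₀ → eIdx i ≠ j := by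
      intro i hi h
      have h2 : 2 * i.1 = j.1 := congrArg Fin.val h
      exact hi (Fin.ext (by omega))
    have h1 : ∀ x : V,
        (∏ i : Fin m, ω (Function.update η j x (eIdx i)) (Function.update η j x (oIdx i)))
        = ω x (η (oIdx i₀)) * ∏ i ∈ Finset.univ.erase i₀, ω (η (eIdx i)) (η (oIdx i)) := by
      intro x
      rw [← Finset.mul_prod_erase Finset.univ _ (Finset.mem_univ i₀)]
      congr 1
      · rw [hje, Function.update_self, Function.update_of_ne hne']
      · exact Finset.prod_congr rfl fun i hi => by
          rw [Function.update_of_ne (hee i (Finset.mem_erase.mp hi).1),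
            Function.update_of_ne (hne i)]
    refine ⟨(∏ i ∈ Finset.univ.erase i₀, ω (η (eIdx i)) (η (oIdx i))) •
        (ω.flip (η (oIdx i₀))), fun x => (h1 x).trans ?_⟩
    simp only [LinearMap.smul_apply, LinearMap.flip_apply, smul_eq_mul]
    ring
  · -- j = oIdx i₀
    obtain ⟨a, ha⟩ := ho
    have hje : j = oIdx i₀ := by
      apply Fin.ext
      have hv : (oIdx i₀).val = 2 * (j.1 / 2) + 1 := rfl
      rw [hv]; omega
    have hne : ∀ i : Fin m, eIdx i ≠ j := by
      intro i h
      have h2 : 2 * i.1 = j.1 := congrArg Fin.val h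
      omega
    have hne' : eIdx i₀ ≠ oIdx i₀ := by
      intro h
      have h2 : 2 * (j.1 / 2) = 2 * (j.1 / 2) + 1 := congrArg Fin.val h
      omega
    have hee : ∀ i : Fin m, i ≠ i₀ → oIdx i ≠ j := by
      intro i hi h
      have h2 : 2 * i.1 + 1 = j.1 := congrArg Fin.val h
      exact hi (Fin.ext (by omega))
    have h1 : ∀ x : V,
        (∏ i : Fin m, ω (Function.update η j x (eIdx i)) (Function.update η j x (oIdx i)))
        = ω (η (eIdx i₀)) x * ∏ i ∈ Finset.univ.erase i₀, ω (η (eIdx i)) (η (oIdx i)) := by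
      intro x
      rw [← Finset.mul_prod_erase Finset.univ _ (Finset.mem_univ i₀)]
      congr 1
      · rw [hje, Function.update_self, Function.update_of_ne hne']
      · exact Finset.prod_congr rfl fun i hi => by
          rw [Function.update_of_ne (hne i),
            Function.update_of_ne (hee i (Finset.mem_erase.mp hi).1)]
    refine ⟨(∏ i ∈ Finset.univ.erase i₀, ω (η (eIdx i)) (η (oIdx i))) •
        (ω (η (eIdx i₀))), fun x => (h1 x).trans ?_⟩
    simp only [LinearMap.smul_apply, smul_eq_mul]
    ring

def prodForm (ω : V →ₗ[k] V →ₗ[k] k) (m : ℕ) :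
    MultilinearMap k (fun _ : Fin (2 * m) => V) k where
  toFun η := ∏ i : Fin m, ω (η (eIdx i)) (η (oIdx i))
  map_update_add' := by
    intro _ η j a b
    obtain ⟨L, hL⟩ := exists_linear ω m η j
    simp only [hL, map_add]
  map_update_smul' := by
    intro _ η j r a
    obtain ⟨L, hL⟩ := exists_linear ω m η j
    simp only [hL, map_smul, smul_eq_mul]

noncomputable def Walt (ω : V →ₗ[k] V →ₗ[k] k) (m : ℕ) :
    AlternatingMap k V k (Fin (2 * m)) :=
  MultilinearMap.alternatization (prodForm ω m)

lemma Walt_apply (ω : V →ₗ[k] V →ₗ[k] k) (m : ℕ) (ξ : Fin (2 * m) → V) :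
    Walt ω m ξ = ∑ σ : Equiv.Perm (Fin (2 * m)), ((Equiv.Perm.sign σ : ℤ) : k) *
      ∏ i : Fin m, ω (ξ (σ (eIdx i))) (ξ (σ (oIdx i))) := by
  rw [Walt, MultilinearMap.alternatization_apply]
  refine Finset.sum_congr rfl fun σ _ => ?_
  rw [MultilinearMap.domDomCongr_apply]
  show _ • (∏ i : Fin m, ω (ξ (σ (eIdx i))) (ξ (σ (oIdx i)))) = _
  rw [Units.smul_def, zsmul_eq_mul]

lemma wedgePow_eq_Walt (ω : V →ₗ[k] V →ₗ[k] k) (m : ℕ) (ξ : Fin (2 * m) → V) :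
    wedgePow (fun u v => ω u v) m ξ = Walt ω m ξ := by
  rw [Walt_apply, wedgePow]
  rfl

end WedgeAux
section Part2
open Matrix
namespace WedgeAux

variable {k V : Type*} [Field k] [AddCommGroup V] [Module k V]

lemma basis_det_mul_det {ι : Type*} [Fintype ι] [DecidableEq ι]
    (b c : Module.Basis ι k V) : c.det b * b.det c = 1 := by
  have h : c.det = c.det b • b.det := AlternatingMap.eq_smul_basis_det b c.det
  have h2 := congrArg (fun g => g (c : ι → V)) h
  simpa [Module.Basis.det_self] using h2.symm

lemma comp_linear_eq_det_smul {N : ℕ} (g : AlternatingMap k V k (Fin N))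
    (b : Module.Basis (Fin N) k V) (φ : V →ₗ[k] V) :
    g.compLinearMap φ = LinearMap.det φ • g := by
  have h1 := AlternatingMap.eq_smul_basis_det b (g.compLinearMap φ)
  have h2 := AlternatingMap.eq_smul_basis_det b g
  have h3 : (g.compLinearMap φ) b = LinearMap.det φ * g b := by
    rw [AlternatingMap.compLinearMap_apply]
    conv_lhs => rw [h2]
    rw [AlternatingMap.smul_apply]
    show g b • b.det (φ ∘ b) = _
    rw [Module.Basis.det_comp, Module.Basis.det_self, mul_one, smul_eq_mul, mul_comm]
  rw [h1, h3, mul_smul]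
  conv_rhs => rw [h2]

lemma Walt_compl₁₂ (ω : V →ₗ[k] V →ₗ[k] k) (m : ℕ) (φ : V →ₗ[k] V) :
    (Walt ω m).compLinearMap φ = Walt (ω.compl₁₂ φ φ) m := by
  ext ξ
  rw [AlternatingMap.compLinearMap_apply, Walt_apply, Walt_apply]
  exact Finset.sum_congr rfl fun σ _ => rfl

lemma Walt_smul (ω : V →ₗ[k] V →ₗ[k] k) (m : ℕ) (r : k) :
    Walt (r • ω) m = (r ^ m) • Walt ω m := by
  ext ξ
  rw [AlternatingMap.smul_apply, Walt_apply, Walt_apply, smul_eq_mul, Finset.mul_sum]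
  refine Finset.sum_congr rfl fun σ _ => ?_
  have : (∏ i : Fin m, (r • ω) (ξ (σ (eIdx i))) (ξ (σ (oIdx i))))
      = r ^ m * ∏ i : Fin m, ω (ξ (σ (eIdx i))) (ξ (σ (oIdx i))) := by
    calc (∏ i : Fin m, (r • ω) (ξ (σ (eIdx i))) (ξ (σ (oIdx i))))
        = ∏ i : Fin m, (r * ω (ξ (σ (eIdx i))) (ξ (σ (oIdx i)))) :=
          Finset.prod_congr rfl fun i _ => by
            simp [LinearMap.smul_apply]
      _ = (∏ _i : Fin m, r) * ∏ i : Fin m, ω (ξ (σ (eIdx i))) (ξ (σ (oIdx i))) := by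
          rw [← Finset.prod_mul_distrib]
      _ = r ^ m * ∏ i : Fin m, ω (ξ (σ (eIdx i))) (ξ (σ (oIdx i))) := by
          rw [Finset.prod_const, Finset.card_univ, Fintype.card_fin]
  rw [this]; ring

lemma Walt_eq_zero_of_radical (ω : V →ₗ[k] V →ₗ[k] k) (m : ℕ) (ξ : Fin (2 * m) → V)
    (j₀ : Fin (2 * m)) (hl : ∀ w, ω (ξ j₀) w = 0) (hr : ∀ w, ω w (ξ j₀) = 0) :
    Walt ω m ξ = 0 := by
  rw [Walt_apply]
  apply Finset.sum_eq_zero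
  intro σ _
  have hp2 : (σ.symm j₀).1 / 2 < m := by have := (σ.symm j₀).2; omega
  rcases Nat.even_or_odd (σ.symm j₀).1 with he | ho
  · obtain ⟨a, ha⟩ := he
    have hkey : σ (eIdx ⟨(σ.symm j₀).1 / 2, hp2⟩) = j₀ := by
      have h1 : eIdx ⟨(σ.symm j₀).1 / 2, hp2⟩ = σ.symm j₀ := by
        apply Fin.ext
        have hv : (eIdx ⟨(σ.symm j₀).1 / 2, hp2⟩).val = 2 * ((σ.symm j₀).1 / 2) := rfl
        rw [hv]; omega
      rw [h1, Equiv.apply_symm_apply]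
    have : (Finset.univ : Finset (Fin m)).prod
        (fun i => ω (ξ (σ (eIdx i))) (ξ (σ (oIdx i)))) = 0 := by
      apply Finset.prod_eq_zero (Finset.mem_univ ⟨(σ.symm j₀).1 / 2, hp2⟩)
      rw [hkey]
      exact hl _
    rw [this, mul_zero]
  · obtain ⟨a, ha⟩ := ho
    have hkey : σ (oIdx ⟨(σ.symm j₀).1 / 2, hp2⟩) = j₀ := by
      have h1 : oIdx ⟨(σ.symm j₀).1 / 2, hp2⟩ = σ.symm j₀ := by
        apply Fin.ext
        have hv : (oIdx ⟨(σ.symm j₀).1 / 2, hp2⟩).val = 2 * ((σ.symm j₀).1 / 2) + 1 := rfl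
        rw [hv]; omega
      rw [h1, Equiv.apply_symm_apply]
    have : (Finset.univ : Finset (Fin m)).prod
        (fun i => ω (ξ (σ (eIdx i))) (ξ (σ (oIdx i)))) = 0 := by
      apply Finset.prod_eq_zero (Finset.mem_univ ⟨(σ.symm j₀).1 / 2, hp2⟩)
      rw [hkey]
      exact hr _
    rw [this, mul_zero]

/-- Gram matrix of a bilinear form with respect to a family of vectors. -/
def gram {ι : Type*} [Fintype ι] (τ : LinearMap.BilinForm k V) (c : ι → V) :
    Matrix ι ι k := Matrix.of fun i j => τ (c i) (c j)

lemma gram_apply {ι : Type*} [Fintype ι] (τ : LinearMap.BilinForm k V) (c : ι → V) (i j : ι) :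
    gram τ c i j = τ (c i) (c j) := rfl

lemma bilin_sum_left {ι : Type*} [Fintype ι] (τ : LinearMap.BilinForm k V)
    (f : ι → k) (v : ι → V) (w : V) :
    τ (∑ i, f i • v i) w = ∑ i, f i * τ (v i) w := by
  rw [map_sum, LinearMap.sum_apply]
  exact Finset.sum_congr rfl fun i _ => by rw [_root_.map_smul, LinearMap.smul_apply, smul_eq_mul]

lemma bilin_sum_right {ι : Type*} [Fintype ι] (τ : LinearMap.BilinForm k V)
    (f : ι → k) (v : ι → V) (w : V) :
    τ w (∑ i, f i • v i) = ∑ i, f i * τ w (v i) := by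
  rw [map_sum]
  exact Finset.sum_congr rfl fun i _ => by rw [_root_.map_smul, smul_eq_mul]

lemma gram_compl₁₂ {ι : Type*} [Fintype ι] [DecidableEq ι] (τ : LinearMap.BilinForm k V)
    (φ : V →ₗ[k] V) (c : Module.Basis ι k V) :
    gram (τ.compl₁₂ φ LinearMap.id) c = (LinearMap.toMatrix c c φ)ᵀ * gram τ c := by
  ext i j
  rw [Matrix.mul_apply, gram_apply, LinearMap.compl₁₂_apply, LinearMap.id_apply]
  conv_lhs => rw [← c.sum_repr (φ (c i))]
  rw [bilin_sum_left]
  exact Finset.sum_congr rfl fun l _ => by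
    rw [Matrix.transpose_apply, LinearMap.toMatrix_apply, gram_apply]

lemma gram_congr {ι : Type*} [Fintype ι] [DecidableEq ι] (τ : LinearMap.BilinForm k V)
    (b c : Module.Basis ι k V) :
    gram τ c = (b.toMatrix c)ᵀ * gram τ b * (b.toMatrix c) := by
  ext i j
  have expand : τ (c i) (c j)
      = ∑ l, ∑ l', b.repr (c i) l * (b.repr (c j) l' * τ (b l) (b l')) := by
    conv_lhs => rw [← b.sum_repr (c i)]
    rw [bilin_sum_left]
    refine Finset.sum_congr rfl fun l _ => ?_
    conv_lhs => rw [← b.sum_repr (c j)]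
    rw [bilin_sum_right, Finset.mul_sum]
  have rhs : ((b.toMatrix c)ᵀ * gram τ (⇑b) * (b.toMatrix c)) i j
      = ∑ l', (∑ l, b.repr (c i) l * gram τ (⇑b) l l') * b.repr (c j) l' := by
    rw [Matrix.mul_apply]
    refine Finset.sum_congr rfl fun l' _ => ?_
    rw [Matrix.mul_apply]
    simp only [Matrix.transpose_apply, Module.Basis.toMatrix_apply, Finset.sum_mul]
  rw [gram_apply, expand, rhs, Finset.sum_comm]
  refine Finset.sum_congr rfl fun l' _ => ?_
  rw [Finset.sum_mul]
  refine Finset.sum_congr rfl fun l _ => ?_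
  rw [gram_apply]
  ring

lemma gram_det_ne_zero {ι : Type*} [Fintype ι] [DecidableEq ι]
    (τ : LinearMap.BilinForm k V) (hτ : τ.SeparatingLeft) (b : Module.Basis ι k V) :
    (gram τ b).det ≠ 0 := by
  intro h0
  have h0' : (gram τ b)ᵀ.det = 0 := by rwa [Matrix.det_transpose]
  obtain ⟨v, hv0, hv⟩ := (Matrix.exists_mulVec_eq_zero_iff).mpr h0'
  have hu : ∀ j, τ (∑ i, v i • b i) (b j) = 0 := by
    intro j
    have := congrFun hv j
    rw [Matrix.mulVec, dotProduct] at this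
    rw [Pi.zero_apply] at this
    rw [bilin_sum_left]
    rw [← this]
    exact Finset.sum_congr rfl fun i _ => by
      rw [Matrix.transpose_apply, gram_apply]; ring
  have hzero : (∑ i, v i • b i) = 0 := by
    apply hτ
    intro w
    conv_lhs => rw [← b.sum_repr w]
    rw [bilin_sum_right]
    exact Finset.sum_eq_zero fun j _ => by rw [hu j, mul_zero]
  apply hv0
  have h := b.repr_sum_self v
  rw [hzero] at h
  simpa using h.symm

end WedgeAux
end Part2
section Part3
namespace WedgeAux
open Matrix

variable {k : Type*} [Field k] [CharZero k]

/-- Standard symplectic Gram pattern on `Fin 2 × Fin m`. -/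
def Jp {m : ℕ} (p q : Fin 2 × Fin m) : k :=
  if p.2 = q.2 then
    (if p.1 = 0 ∧ q.1 = 1 then 1 else if p.1 = 1 ∧ q.1 = 0 then -1 else 0)
  else 0

theorem sympl_basis (mm : ℕ) :
    ∀ (V' : Type*) [AddCommGroup V'] [Module k V'] [FiniteDimensional k V']
      (ω : LinearMap.BilinForm k V'),
      (∀ u v, ω u v = -ω v u) → ω.SeparatingLeft → Module.finrank k V' = 2 * mm →
      ∃ c : Module.Basis (Fin 2 × Fin mm) k V', ∀ p q, ω (c p) (c q) = Jp p q := by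
  induction mm with
  | zero =>
    intro V' _ _ _ ω hskew hnd hrank
    rw [mul_zero] at hrank
    have : Subsingleton V' := Module.finrank_zero_iff.mp hrank
    have hie : IsEmpty (Fin 2 × Fin 0) := ⟨fun p => p.2.elim0⟩
    exact ⟨Module.Basis.empty V', fun p => isEmptyElim p⟩
  | succ m ih =>
    intro V' _ _ _ ω hskew hnd hrank
    have hnt : Nontrivial V' := Module.nontrivial_of_finrank_pos (by rw [hrank]; omega)
    obtain ⟨u, hu⟩ := exists_ne (0 : V')
    have : ¬(∀ w, ω u w = 0) := fun h => hu (hnd u h)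
    push_neg at this
    obtain ⟨v₀, hv₀⟩ := this
    obtain ⟨v, huv⟩ : ∃ v, ω u v = 1 :=
      ⟨(ω u v₀)⁻¹ • v₀, by rw [_root_.map_smul, smul_eq_mul, inv_mul_cancel₀ hv₀]⟩
    have huu : ω u u = 0 := by
      have h := hskew u u
      have h2 : ω u u + ω u u = 0 := by nth_rewrite 1 [h]; ring
      exact add_self_eq_zero.mp h2
    have hvv : ω v v = 0 := by
      have h := hskew v v
      have h2 : ω v v + ω v v = 0 := by nth_rewrite 1 [h]; ring
      exact add_self_eq_zero.mp h2
    have hvu : ω v u = -1 := by rw [hskew v u, huv]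
    have li : LinearIndependent k ![u, v] := by
      rw [linearIndependent_fin2]
      constructor
      · show v ≠ 0
        intro h
        rw [h, map_zero] at huv
        exact one_ne_zero huv.symm
      · intro a h
        have h' : u = a • v := by
          first
          | exact h
          | exact h.symm
          | simpa using h
          | simpa using h.symm
        rw [h', _root_.map_smul] at huv
        rw [LinearMap.smul_apply, hvv, smul_eq_mul, mul_zero] at huv
        exact one_ne_zero huv.symm
    set W : Submodule k V' := Submodule.span k (Set.range ![u, v]) with hW
    have hrange : Set.range ![u, v] = {u, v} := by
      ext w
      constructor
      · rintro ⟨i, rfl⟩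
        fin_cases i
        · exact Or.inl rfl
        · exact Or.inr rfl
      · rintro (rfl | rfl)
        exacts [⟨0, rfl⟩, ⟨1, rfl⟩]
    have hWu : u ∈ W := Submodule.subset_span ⟨0, rfl⟩
    have hWv : v ∈ W := Submodule.subset_span ⟨1, rfl⟩
    set Worth : Submodule k V' := LinearMap.ker (ω u) ⊓ LinearMap.ker (ω v) with hWo
    have memWorth : ∀ z : V', z ∈ Worth ↔ ω u z = 0 ∧ ω v z = 0 := by
      intro z
      rw [hWo, Submodule.mem_inf, LinearMap.mem_ker, LinearMap.mem_ker]
    have hmemW : ∀ w : V', w ∈ W ↔ ∃ a b : k, a • u + b • v = w := by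
      intro w
      rw [hW, hrange, Submodule.mem_span_pair]
    have hdisj : ∀ y, y ∈ W → y ∈ Worth → y = 0 := by
      intro y hyW hyO
      obtain ⟨a, b, hab⟩ := (hmemW y).mp hyW
      obtain ⟨h1, h2⟩ := (memWorth y).mp hyO
      have e1 : ω u y = b := by
        rw [← hab, map_add, _root_.map_smul, _root_.map_smul, huu, huv, smul_eq_mul, smul_eq_mul]
        ring
      have e2 : ω v y = -a := by
        rw [← hab, map_add, _root_.map_smul, _root_.map_smul, hvu, hvv, smul_eq_mul, smul_eq_mul]
        ring
      have hb : b = 0 := e1.symm.trans h1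
      have ha : a = 0 := by
        have := e2.symm.trans h2
        exact neg_eq_zero.mp this
      rw [← hab, ha, hb, zero_smul, zero_smul, add_zero]
    have hdecomp : ∀ x : V', ∃ w ∈ W, ∃ z ∈ Worth, x = w + z := by
      intro x
      refine ⟨(ω u x) • v - (ω v x) • u, ?_, x - ((ω u x) • v - (ω v x) • u), ?_, by abel⟩
      · exact Submodule.sub_mem _ (Submodule.smul_mem _ _ hWv) (Submodule.smul_mem _ _ hWu)
      · rw [memWorth]
        constructor
        · rw [map_sub, map_sub, _root_.map_smul, _root_.map_smul, huv, huu,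
            smul_eq_mul, smul_eq_mul]
          ring
        · rw [map_sub, map_sub, _root_.map_smul, _root_.map_smul, hvv, hvu,
            smul_eq_mul, smul_eq_mul]
          ring
    have hcompl : IsCompl W Worth := by
      constructor
      · rw [Submodule.disjoint_def]
        exact hdisj
      · rw [codisjoint_iff, Submodule.eq_top_iff']
        intro x
        obtain ⟨w, hw, z, hz, hx⟩ := hdecomp x
        exact hx ▸ Submodule.add_mem_sup hw hz
    have hrankW : Module.finrank k ↥W = 2 := by
      rw [hW, finrank_span_eq_card li]
      simp
    have hrankWo : Module.finrank k ↥Worth = 2 * m := by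
      have h1 := Submodule.finrank_sup_add_finrank_inf_eq W Worth
      rw [(disjoint_iff.mp hcompl.disjoint), (codisjoint_iff.mp hcompl.codisjoint)] at h1
      rw [finrank_top, finrank_bot, hrank, hrankW] at h1
      omega
    -- restricted form
    set ω' : LinearMap.BilinForm k ↥Worth := ω.restrict Worth with hω'
    have hskew' : ∀ a b : ↥Worth, ω' a b = -ω' b a := fun a b => hskew ↑a ↑b
    have hnd' : ω'.SeparatingLeft := by
      intro y hy
      have hyz : ∀ x : V', ω ↑y x = 0 := by
        intro x
        obtain ⟨w, hw, z, hz, hx⟩ := hdecomp x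
        obtain ⟨a, b, hab⟩ := (hmemW w).mp hw
        have hyu : ω ↑y u = 0 := by
          rw [hskew]
          have := ((memWorth ↑y).mp y.2).1
          rw [this, neg_zero]
        have hyv : ω ↑y v = 0 := by
          rw [hskew]
          have := ((memWorth ↑y).mp y.2).2
          rw [this, neg_zero]
        have hyw : ω ↑y w = 0 := by
          rw [← hab, map_add, _root_.map_smul, _root_.map_smul, hyu, hyv]
          simp
        have hyz' : ω ↑y z = 0 := hy ⟨z, hz⟩
        rw [hx, map_add, hyw, hyz', add_zero]
      have := hnd ↑y hyz
      exact Subtype.ext this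
    obtain ⟨c', hc'⟩ := ih ↥Worth ω' hskew' hnd' hrankWo
    -- basis of W
    set bW : Module.Basis (Fin 2) k ↥W := Module.Basis.span li with hbW
    set cb : Module.Basis (Fin 2 ⊕ (Fin 2 × Fin m)) k V' :=
      (bW.prod c').map (Submodule.prodEquivOfIsCompl W Worth hcompl) with hcb
    have h_inl : ∀ i : Fin 2, cb (Sum.inl i) = ![u, v] i := by
      intro i
      rw [hcb, Module.Basis.map_apply]
      have h1 : (bW.prod c') (Sum.inl i) = (bW i, 0) :=
        Prod.ext (Module.Basis.prod_apply_inl_fst _ _ _) (Module.Basis.prod_apply_inl_snd _ _ _)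
      rw [h1, Submodule.coe_prodEquivOfIsCompl']
      show ↑(bW i) + ↑(0 : ↥Worth) = ![u, v] i
      rw [hbW, Module.Basis.span_apply]
      simp
    have h_inr : ∀ p : Fin 2 × Fin m, cb (Sum.inr p) = ↑(c' p) := by
      intro p
      rw [hcb, Module.Basis.map_apply]
      have h1 : (bW.prod c') (Sum.inr p) = (0, c' p) :=
        Prod.ext (Module.Basis.prod_apply_inr_fst _ _ _) (Module.Basis.prod_apply_inr_snd _ _ _)
      rw [h1, Submodule.coe_prodEquivOfIsCompl']
      simp
    set eqv : (Fin 2 ⊕ (Fin 2 × Fin m)) ≃ Fin 2 × Fin (m + 1) :=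
      { toFun := Sum.elim (fun a => (a, 0)) (fun p => (p.1, p.2.succ))
        invFun := fun p => Fin.cases (Sum.inl p.1) (fun i => Sum.inr (p.1, i)) p.2
        left_inv := by rintro (a | ⟨a, i⟩) <;> simp
        right_inv := by
          rintro ⟨a, i⟩
          induction i using Fin.cases <;> simp } with heqv
    refine ⟨cb.reindex eqv, ?_⟩
    rintro ⟨a, i⟩ ⟨b, j⟩
    rw [Module.Basis.reindex_apply, Module.Basis.reindex_apply]
    have hsymm0 : ∀ a : Fin 2, eqv.symm (a, 0) = Sum.inl a := fun a => rfl
    have hsymmS : ∀ (a : Fin 2) (i : Fin m), eqv.symm (a, i.succ) = Sum.inr (a, i) :=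
      fun a i => by
        show Fin.cases (Sum.inl a) (fun i' => Sum.inr (a, i')) i.succ = Sum.inr (a, i)
        rw [Fin.cases_succ]
    induction i using Fin.cases with
    | zero =>
      induction j using Fin.cases with
      | zero =>
        rw [hsymm0, hsymm0, h_inl, h_inl]
        fin_cases a <;> fin_cases b <;>
          simp [Jp, huu, huv, hvu, hvv]
      | succ j' =>
        rw [hsymm0, hsymmS, h_inl, h_inr]
        have hz := (memWorth ↑(c' (b, j'))).mp (c' (b, j')).2
        have hval : ω (![u, v] a) ↑(c' (b, j')) = 0 := by
          fin_cases a
          · exact hz.1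
          · exact hz.2
        rw [hval, Jp, if_neg]
        exact fun h => (Fin.succ_ne_zero j') h.symm
    | succ i' =>
      induction j using Fin.cases with
      | zero =>
        rw [hsymmS, hsymm0, h_inr, h_inl]
        have hz := (memWorth ↑(c' (a, i'))).mp (c' (a, i')).2
        have hval : ω ↑(c' (a, i')) (![u, v] b) = 0 := by
          rw [hskew]
          fin_cases b
          · show -(ω u) ↑(c' (a, i')) = 0
            rw [hz.1, neg_zero]
          · show -(ω v) ↑(c' (a, i')) = 0
            rw [hz.2, neg_zero]
        rw [hval, Jp, if_neg]
        exact fun h => (Fin.succ_ne_zero i') h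
      | succ j' =>
        rw [hsymmS, hsymmS, h_inr, h_inr]
        have h2 : ω ↑(c' (a, i')) ↑(c' (b, j')) = Jp (a, i') (b, j') := hc' (a, i') (b, j')
        rw [h2]
        show Jp (a, i') (b, j') = Jp (a, i'.succ) (b, j'.succ)
        by_cases hij : i' = j'
        · subst hij
          simp [Jp]
        · rw [Jp, if_neg hij, Jp, if_neg (fun h => hij (Fin.succ_inj.mp h))]

end WedgeAux
end Part3
section Part4
namespace WedgeAux
open Matrix

variable {k : Type*} [Field k] [CharZero k]

def pairEquiv (m : ℕ) : (Fin 2 ⊕ (Fin 2 × Fin m)) ≃ Fin 2 × Fin (m + 1) :=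
  { toFun := Sum.elim (fun a => (a, 0)) (fun p => (p.1, p.2.succ))
    invFun := fun p => Fin.cases (Sum.inl p.1) (fun i => Sum.inr (p.1, i)) p.2
    left_inv := by rintro (a | ⟨a, i⟩) <;> simp
    right_inv := by rintro ⟨a, i⟩; induction i using Fin.cases <;> simp }

lemma pairEquiv_symm_zero (m : ℕ) (a : Fin 2) :
    (pairEquiv m).symm (a, 0) = Sum.inl a := rfl

lemma pairEquiv_symm_succ (m : ℕ) (a : Fin 2) (i : Fin m) :
    (pairEquiv m).symm (a, i.succ) = Sum.inr (a, i) := by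
  show Fin.cases (Sum.inl a) (fun i' => Sum.inr (a, i')) i.succ = Sum.inr (a, i)
  rw [Fin.cases_succ]

def Jmat (m : ℕ) : Matrix (Fin 2 × Fin m) (Fin 2 × Fin m) k :=
  Matrix.of fun p q => Jp p q

lemma Jp_succ {m : ℕ} (a b : Fin 2) (i j : Fin m) :
    (Jp (a, i.succ) (b, j.succ) : k) = Jp (a, i) (b, j) := by
  by_cases hij : i = j
  · subst hij; simp [Jp]
  · rw [Jp, if_neg (fun h => hij (Fin.succ_inj.mp h)), Jp, if_neg hij]

lemma Jmat_det (m : ℕ) : (Jmat m : Matrix _ _ k).det = 1 := by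
  induction m with
  | zero =>
    haveI : IsEmpty (Fin 2 × Fin 0) := ⟨fun p => p.2.elim0⟩
    rw [Matrix.det_isEmpty]
  | succ m ih =>
    have hJ : (Jmat (m + 1) : Matrix _ _ k)
        = ((Matrix.fromBlocks (!![0, 1; -1, 0] : Matrix (Fin 2) (Fin 2) k) 0 0 (Jmat m)).submatrix
            (pairEquiv m).symm (pairEquiv m).symm) := by
      ext ⟨a, i⟩ ⟨b, j⟩
      rw [Matrix.submatrix_apply]
      induction i using Fin.cases with
      | zero =>
        induction j using Fin.cases with
        | zero =>
          rw [pairEquiv_symm_zero, pairEquiv_symm_zero, Matrix.fromBlocks_apply₁₁]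
          show (Jp (m := m+1) (a, 0) (b, 0) : k) = _
          fin_cases a <;> fin_cases b <;> norm_num [Jp]
        | succ j' =>
          rw [pairEquiv_symm_zero, pairEquiv_symm_succ, Matrix.fromBlocks_apply₁₂]
          show (Jp (m := m+1) (a, 0) (b, j'.succ) : k) = 0
          rw [Jp, if_neg (fun h => (Fin.succ_ne_zero j') h.symm)]
      | succ i' =>
        induction j using Fin.cases with
        | zero =>
          rw [pairEquiv_symm_succ, pairEquiv_symm_zero, Matrix.fromBlocks_apply₂₁]
          show (Jp (m := m+1) (a, i'.succ) (b, 0) : k) = 0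
          rw [Jp, if_neg (fun h => (Fin.succ_ne_zero i') h)]
        | succ j' =>
          rw [pairEquiv_symm_succ, pairEquiv_symm_succ, Matrix.fromBlocks_apply₂₂]
          show (Jp (m := m+1) (a, i'.succ) (b, j'.succ) : k) = Jp (a, i') (b, j')
          exact Jp_succ a b i' j'
    rw [hJ, Matrix.det_submatrix_equiv_self, Matrix.det_fromBlocks_zero₁₂, ih,
      Matrix.det_fin_two_of]
    norm_num

/-- The universal "Pfaffian-by-antisymmetrisation" constant of the standard form. -/
noncomputable def P0 (m : ℕ) : k :=
  ∑ σ : Equiv.Perm (Fin (2 * m)), ((Equiv.Perm.sign σ : ℤ) : k) *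
    ∏ i : Fin m, Jp ((finProdFinEquiv : Fin 2 × Fin m ≃ Fin (2 * m)).symm (σ (eIdx i)))
      ((finProdFinEquiv : Fin 2 × Fin m ≃ Fin (2 * m)).symm (σ (oIdx i)))

variable {V : Type*} [AddCommGroup V] [Module k V]

lemma Walt_eq_P0 (ω : V →ₗ[k] V →ₗ[k] k) (m : ℕ) (cR : Module.Basis (Fin (2 * m)) k V)
    (hgram : ∀ a b : Fin (2 * m), ω (cR a) (cR b)
      = Jp ((finProdFinEquiv : Fin 2 × Fin m ≃ Fin (2 * m)).symm a)
        ((finProdFinEquiv : Fin 2 × Fin m ≃ Fin (2 * m)).symm b)) :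
    Walt ω m cR = P0 m := by
  rw [Walt_apply, P0]
  refine Finset.sum_congr rfl fun σ _ => ?_
  congr 1
  exact Finset.prod_congr rfl fun i _ => hgram _ _

lemma gram_eq_Jmat (ω : V →ₗ[k] V →ₗ[k] k) (m : ℕ) (cR : Module.Basis (Fin (2 * m)) k V)
    (hgram : ∀ a b : Fin (2 * m), ω (cR a) (cR b)
      = Jp ((finProdFinEquiv : Fin 2 × Fin m ≃ Fin (2 * m)).symm a)
        ((finProdFinEquiv : Fin 2 × Fin m ≃ Fin (2 * m)).symm b)) :
    gram ω cR = (Jmat m).submatrix (finProdFinEquiv : Fin 2 × Fin m ≃ Fin (2 * m)).symm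
      (finProdFinEquiv : Fin 2 × Fin m ≃ Fin (2 * m)).symm := by
  ext a b
  rw [Matrix.submatrix_apply, gram_apply, hgram]
  rfl

lemma gram_det_eq_one (ω : V →ₗ[k] V →ₗ[k] k) (m : ℕ) (cR : Module.Basis (Fin (2 * m)) k V)
    (hgram : ∀ a b : Fin (2 * m), ω (cR a) (cR b)
      = Jp ((finProdFinEquiv : Fin 2 × Fin m ≃ Fin (2 * m)).symm a)
        ((finProdFinEquiv : Fin 2 × Fin m ≃ Fin (2 * m)).symm b)) :
    (gram ω cR).det = 1 := by
  rw [gram_eq_Jmat ω m cR hgram, Matrix.det_submatrix_equiv_self, Jmat_det]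

end WedgeAux
end Part4
section Part5
open WedgeAux Matrix

lemma wedgePow_congr {k V : Type*} [Field k] [AddCommGroup V] [Module k V]
    (ω ω' : V → V → k) (m : ℕ) (ξ : Fin (2 * m) → V) (h : ∀ u v, ω u v = ω' u v) :
    wedgePow ω m ξ = wedgePow ω' m ξ := by
  unfold wedgePow
  exact Finset.sum_congr rfl fun σ _ => by
    congr 1
    exact Finset.prod_congr rfl fun i _ => by rw [h]


set_option maxHeartbeats 1600000 in
/-- Assume `dim_k V = 4n`, `n ≥ 1`.  For every nonzero alternating
`4n`-linear form `vol` on `V` there is a constant `c ∈ k` such that for every `x ∈ H` the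
`2n`-th wedge power of `ω_x` equals `c · Q(x)^n · vol`. -/
theorem wedgePow_omega_eq_const_mul_Q_pow
    {k : Type*} [Field k] [CharZero k]
    {H : Type*} [AddCommGroup H] [Module k H] [FiniteDimensional k H]
    (Q : QuadraticForm k H)
    (B : LinearMap.BilinForm k H)
    (hBQ : ∀ x, B x x = Q x)
    (hBsymm : ∀ x y, B x y = B y x)
    (hBnd : LinearMap.BilinForm.Nondegenerate B)
    {V : Type*} [AddCommGroup V] [Module k V] [FiniteDimensional k V]
    [Module (CliffordAlgebra Q) V] [IsScalarTower k (CliffordAlgebra Q) V]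
    (τ : LinearMap.BilinForm k V)
    (hτsymm : ∀ u v : V, τ u v = τ v u)
    (hτnd : LinearMap.BilinForm.Nondegenerate τ)
    (hτinv : ∀ (a : CliffordAlgebra Q) (u v : V),
      τ (a • u) v = τ u (involute (reverse a) • v))
    (n : ℕ) (hn : 1 ≤ n) (hdim : Module.finrank k V = 4 * n)
    (vol : AlternatingMap k V k (Fin (4 * n))) (hvol : vol ≠ 0) :
    ∃ c : k, ∀ (x : H) (ξ : Fin (2 * (2 * n)) → V),
      wedgePow (fun u v => τ (ι Q x • u) v) (2 * n) ξ
        = c * Q x ^ n * vol (fun i => ξ (Fin.cast (by ring) i)) := by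
  classical
  haveI : Infinite k := Infinite.of_injective (Nat.cast : ℕ → k) Nat.cast_injective
  -- scalar commutation
  have hsc : ∀ (c : k) (a : CliffordAlgebra Q) (w : V), a • (c • w) = c • (a • w) := by
    intro c a w
    have h1 : c • w = (algebraMap k (CliffordAlgebra Q) c) • w := (algebraMap_smul _ c w).symm
    rw [h1, ← mul_smul, ← Algebra.commutes c a, mul_smul, algebraMap_smul]
  -- the action operators
  set A : H → V →ₗ[k] V := fun x =>
    { toFun := fun w => ι Q x • w
      map_add' := fun w₁ w₂ => smul_add _ _ _
      map_smul' := fun c w => by simp only [RingHom.id_apply]; exact hsc c _ w } with hA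
  have hAapply : ∀ (x : H) (w : V), A x w = ι Q x • w := fun _ _ => rfl
  set Wb : H → LinearMap.BilinForm k V := fun x => τ.compl₁₂ (A x) LinearMap.id with hWbdef
  have hWb : ∀ (x : H) (u w : V), Wb x u w = τ (ι Q x • u) w := fun x u w => rfl
  -- Clifford identities
  have hmove : ∀ (x : H) (u w : V), τ (ι Q x • u) w = - τ u (ι Q x • w) := by
    intro x u w
    rw [hτinv (ι Q x) u w, CliffordAlgebra.reverse_ι, CliffordAlgebra.involute_ι,
      neg_smul, map_neg]
  have hskewτ : ∀ (x : H) (u w : V), τ (ι Q x • u) w = - τ (ι Q x • w) u := by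
    intro x u w
    rw [hmove, hτsymm]
  have hQsmul : ∀ (x : H) (w : V), ι Q x • (ι Q x • w) = Q x • w := by
    intro x w
    rw [← mul_smul, CliffordAlgebra.ι_sq_scalar, algebraMap_smul]
  have hskewWb : ∀ (x : H) (u w : V), Wb x u w = - Wb x w u := by
    intro x u w
    rw [hWb, hWb]
    exact hskewτ x u w
  have hpull : ∀ x : H, (Wb x).compl₁₂ (A x) (A x) = (-(Q x)) • (Wb x) := by
    intro x
    ext u w
    have hm2 : τ u (ι Q x • w) = - τ (ι Q x • u) w := by rw [hmove]; ring
    show τ (ι Q x • (ι Q x • u)) (ι Q x • w) = ((-(Q x)) • Wb x) u w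
    rw [hQsmul, _root_.map_smul τ (Q x) u, LinearMap.smul_apply, smul_eq_mul, hm2,
      LinearMap.smul_apply, LinearMap.smul_apply, smul_eq_mul, hWb]
    ring
  -- bases and volume forms
  have h42 : Module.finrank k V = 2 * (2 * n) := by rw [hdim]; ring
  set b : Module.Basis (Fin (2 * (2 * n))) k V := Module.finBasisOfFinrankEq k V h42 with hbdef
  set vol' : AlternatingMap k V k (Fin (2 * (2 * n))) :=
    vol.domDomCongr (finCongr (by ring : 4 * n = 2 * (2 * n))) with hvol'def
  have hvol' : vol' ≠ 0 := by
    intro h0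
    exact hvol ((AlternatingMap.domDomCongr_eq_zero_iff _ vol).mp h0)
  set v0 : k := vol' b with hv0def
  have hv0 : v0 ≠ 0 := (AlternatingMap.map_basis_ne_zero_iff b vol').mpr hvol'
  -- coefficient functions
  set F : H → k := fun x => Walt (Wb x) (2 * n) b with hFdef
  set fful : H → k := fun x => F x * v0⁻¹ with hffuldef
  have hWxval : ∀ (x : H) (ξ : Fin (2 * (2 * n)) → V),
      Walt (Wb x) (2 * n) ξ = fful x * vol' ξ := by
    intro x ξ
    have h1 := AlternatingMap.eq_smul_basis_det b (Walt (Wb x) (2 * n))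
    have h2 := AlternatingMap.eq_smul_basis_det b vol'
    have e1 : Walt (Wb x) (2 * n) ξ = F x * b.det ξ := by
      conv_lhs => rw [h1]
      rw [AlternatingMap.smul_apply, smul_eq_mul]
    have e2 : vol' ξ = v0 * b.det ξ := by
      conv_lhs => rw [h2]
      rw [AlternatingMap.smul_apply, smul_eq_mul]
    rw [e1, e2, hffuldef]
    field_simp
  -- nondegeneracy from anisotropy
  have hnondeg : ∀ x : H, Q x ≠ 0 → (Wb x).SeparatingLeft := by
    intro x hQ u hu
    have h1 : ι Q x • u = 0 := by
      apply hτnd.1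
      intro w
      exact hu w
    have h2 : Q x • u = 0 := by rw [← hQsmul, h1, smul_zero]
    rcases smul_eq_zero.mp h2 with h | h
    · exact absurd h hQ
    · exact h
  -- degenerate case : F vanishes
  have hdegzero : ∀ x : H, ¬ (Wb x).SeparatingLeft → F x = 0 := by
    intro x hnsep
    rw [LinearMap.SeparatingLeft] at hnsep
    push_neg at hnsep
    obtain ⟨z, hzrad, hz0⟩ := hnsep
    -- a basis through z
    have hli : LinearIndepOn k id ({z} : Set V) :=
      LinearIndepOn.singleton (v := id) hz0
    set bZ := Module.Basis.extend hli with hbZ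
    haveI : Fintype ↥(hli.extend (Set.subset_univ _)) := FiniteDimensional.fintypeBasisIndex bZ
    have hcard : Fintype.card ↥(hli.extend (Set.subset_univ _)) = 2 * (2 * n) := by
      rw [← Module.finrank_eq_card_basis bZ, h42]
    set e := Fintype.equivFinOfCardEq hcard with he
    set cz : Module.Basis (Fin (2 * (2 * n))) k V := bZ.reindex e with hcz
    have hzmem : z ∈ hli.extend (Set.subset_univ _) :=
      hli.subset_extend _ rfl
    set j₀ : Fin (2 * (2 * n)) := e ⟨z, hzmem⟩ with hj₀
    have hczj : cz j₀ = z := by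
      rw [hcz, Module.Basis.reindex_apply, hj₀, Equiv.symm_apply_apply]
      exact Module.Basis.extend_apply_self hli ⟨z, hzmem⟩
    have hWcz : Walt (Wb x) (2 * n) cz = 0 := by
      apply Walt_eq_zero_of_radical (Wb x) (2 * n) cz j₀
      · intro w
        rw [hczj]
        exact hzrad w
      · intro w
        rw [hczj, hskewWb, hzrad w, neg_zero]
    have h1 := AlternatingMap.eq_smul_basis_det cz (Walt (Wb x) (2 * n))
    rw [hWcz, zero_smul] at h1
    rw [hFdef]
    show Walt (Wb x) (2 * n) b = 0
    rw [h1]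
    rfl
  -- global constants
  set T0 : k := (gram τ b).det with hT0def
  have hT0 : T0 ≠ 0 := gram_det_ne_zero τ hτnd.1 b
  set P0k : k := P0 (2 * n) with hP0def
  -- the key identities in the nondegenerate case
  have hkey : ∀ x : H, (Wb x).SeparatingLeft →
      (F x) ^ 2 = P0k ^ 2 * LinearMap.det (A x) * T0 ∧
      (F x = 0 ↔ P0k = 0) ∧ LinearMap.det (A x) ≠ 0 := by
    intro x hsep
    obtain ⟨c, hc⟩ := sympl_basis (2 * n) V (Wb x) (hskewWb x) hsep h42
    set E : Fin 2 × Fin (2 * n) ≃ Fin (2 * (2 * n)) :=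
      (finProdFinEquiv : Fin 2 × Fin (2 * n) ≃ Fin (2 * (2 * n))) with hE
    set cR : Module.Basis (Fin (2 * (2 * n))) k V := c.reindex E with hcR
    have hgram : ∀ a b' : Fin (2 * (2 * n)), Wb x (cR a) (cR b')
        = Jp (E.symm a) (E.symm b') := by
      intro a b'
      rw [hcR, Module.Basis.reindex_apply, Module.Basis.reindex_apply]
      exact hc _ _
    have hWP : Walt (Wb x) (2 * n) cR = P0k := Walt_eq_P0 (Wb x) (2 * n) cR hgram
    have hFx : F x = P0k * cR.det b := by
      have h1 := AlternatingMap.eq_smul_basis_det cR (Walt (Wb x) (2 * n))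
      rw [hWP] at h1
      rw [hFdef]
      show Walt (Wb x) (2 * n) b = P0k * cR.det b
      conv_lhs => rw [h1]
      rw [AlternatingMap.smul_apply, smul_eq_mul]
    have hdets : cR.det b * b.det cR = 1 := basis_det_mul_det b cR
    have hgdet1 : (gram (Wb x) cR).det = 1 := gram_det_eq_one (Wb x) (2 * n) cR hgram
    have hgramA : gram (Wb x) cR = (LinearMap.toMatrix cR cR (A x))ᵀ * gram τ cR :=
      gram_compl₁₂ τ (A x) cR
    have hgcongr : gram τ cR = (b.toMatrix cR)ᵀ * gram τ b * (b.toMatrix cR) :=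
      gram_congr τ b cR
    have hdetgram : (gram τ cR).det = (b.det cR) ^ 2 * T0 := by
      rw [hgcongr, Matrix.det_mul, Matrix.det_mul, Matrix.det_transpose, ← Module.Basis.det_apply,
        hT0def]
      ring
    have hmaster : LinearMap.det (A x) * ((b.det cR) ^ 2 * T0) = 1 := by
      rw [← hdetgram, ← LinearMap.det_toMatrix cR (A x), ← Matrix.det_transpose
        (LinearMap.toMatrix cR cR (A x)), ← Matrix.det_mul, ← hgramA, hgdet1]
    constructor
    · -- F x ^ 2 = P0k ^ 2 * det A * T0
      have : F x ^ 2 = P0k ^ 2 * (cR.det b) ^ 2 := by rw [hFx]; ring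
      rw [this]
      have h2 : (cR.det b) ^ 2 * ((b.det cR) ^ 2) = 1 := by
        rw [← mul_pow, hdets, one_pow]
      calc P0k ^ 2 * (cR.det b) ^ 2
          = P0k ^ 2 * (cR.det b) ^ 2 * (LinearMap.det (A x) * ((b.det cR) ^ 2 * T0)) := by
            rw [hmaster, mul_one]
        _ = P0k ^ 2 * LinearMap.det (A x) * T0 * ((cR.det b) ^ 2 * (b.det cR) ^ 2) := by ring
        _ = P0k ^ 2 * LinearMap.det (A x) * T0 := by rw [h2, mul_one]
    constructor
    · -- F x = 0 ↔ P0k = 0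
      rw [hFx]
      constructor
      · intro h
        rcases mul_eq_zero.mp h with h | h
        · exact h
        · exfalso
          rw [h, zero_mul] at hdets
          exact zero_ne_one hdets
      · intro h
        rw [h, zero_mul]
    · -- det A ≠ 0
      intro h
      rw [h, zero_mul] at hmaster
      exact zero_ne_one hmaster
  -- the pullback identity (**)
  have hstar : ∀ x : H, LinearMap.det (A x) * F x = Q x ^ (2 * n) * F x := by
    intro x
    have h1 : (Walt (Wb x) (2 * n)).compLinearMap (A x)
        = LinearMap.det (A x) • Walt (Wb x) (2 * n) :=
      comp_linear_eq_det_smul _ b (A x)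
    have h2 : (Walt (Wb x) (2 * n)).compLinearMap (A x)
        = Walt ((Wb x).compl₁₂ (A x) (A x)) (2 * n) := Walt_compl₁₂ (Wb x) (2 * n) (A x)
    have h3 : Walt ((Wb x).compl₁₂ (A x) (A x)) (2 * n)
        = ((-(Q x)) ^ (2 * n)) • Walt (Wb x) (2 * n) := by
      rw [hpull x, Walt_smul]
    have h4 : ((-(Q x)) ^ (2 * n) : k) = Q x ^ (2 * n) :=
      Even.neg_pow ⟨n, by ring⟩ (Q x)
    have := h1.symm.trans (h2.trans h3)
    have h5 := congrArg (fun g => g (b : Fin (2 * (2 * n)) → V)) this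
    simp only [AlternatingMap.smul_apply, smul_eq_mul] at h5
    rw [h4] at h5
    have h6 : F x = Walt (Wb x) (2 * n) b := rfl
    rw [h6]
    exact h5
  -- the square identity, globally
  have hsq : ∀ x : H, (F x) ^ 2 = P0k ^ 2 * T0 * Q x ^ (2 * n) := by
    intro x
    by_cases hQ : Q x = 0
    · have hF0 : F x = 0 := by
        by_cases hsep : (Wb x).SeparatingLeft
        · obtain ⟨_, _, hdA⟩ := hkey x hsep
          have := hstar x
          rw [hQ, zero_pow (by omega : 2 * n ≠ 0), zero_mul] at this
          exact (mul_eq_zero.mp this).resolve_left hdA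
        · exact hdegzero x hsep
      rw [hF0, hQ, zero_pow (by omega : 2 * n ≠ 0)]
      ring
    · have hsep := hnondeg x hQ
      obtain ⟨hsq1, hiff, hdA⟩ := hkey x hsep
      by_cases hF : F x = 0
      · rw [hF, hiff.mp hF]
        ring
      · have hdet : LinearMap.det (A x) = Q x ^ (2 * n) := by
          have := hstar x
          exact mul_right_cancel₀ hF this
        rw [hsq1, hdet]
        ring
  -- now find the constant
  by_cases hall : ∀ x : H, Q x = 0
  · refine ⟨0, fun x ξ => ?_⟩
    have hF0 : F x = 0 := by
      have := hsq x
      rw [hall x, zero_pow (by omega : 2 * n ≠ 0), mul_zero] at this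
      exact pow_eq_zero_iff (n := 2) (by omega) |>.mp this
    rw [wedgePow_congr _ (fun u v => Wb x u v) (2 * n) ξ (fun u v => (hWb x u v).symm),
      wedgePow_eq_Walt, hWxval]
    show fful x * vol' ξ = 0 * Q x ^ n * vol (fun i => ξ (Fin.cast (by ring) i))
    rw [hffuldef]
    show F x * v0⁻¹ * vol' ξ = _
    rw [hF0]
    ring
  · push_neg at hall
    obtain ⟨x₀, hq⟩ := hall
    set c : k := fful x₀ * ((Q x₀) ^ n)⁻¹ with hcdef
    have hqn : (Q x₀) ^ n ≠ 0 := pow_ne_zero n hq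
    have hcq : c * Q x₀ ^ n = fful x₀ := by
      rw [hcdef]
      field_simp
    have hsqf : ∀ x : H, (fful x) ^ 2 = (P0k ^ 2 * T0 * (v0⁻¹) ^ 2) * Q x ^ (2 * n) := by
      intro x
      rw [hffuldef]
      show (F x * v0⁻¹) ^ 2 = _
      rw [mul_pow, hsq x]
      ring
    have hκc : P0k ^ 2 * T0 * (v0⁻¹) ^ 2 = c ^ 2 := by
      have h1 := hsqf x₀
      have h3 : (Q x₀ ^ n) ^ 2 = Q x₀ ^ (2 * n) := by
        rw [← pow_mul]; ring_nf
      have h2 : c ^ 2 * Q x₀ ^ (2 * n) = (P0k ^ 2 * T0 * (v0⁻¹) ^ 2) * Q x₀ ^ (2 * n) := by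
        rw [← h3, ← mul_pow, hcq, h1, h3]
      have h4 : Q x₀ ^ (2 * n) ≠ 0 := pow_ne_zero _ hq
      exact (mul_right_cancel₀ h4 h2).symm
    -- main pointwise identity via a line polynomial
    have hmain : ∀ x : H, fful x = c * Q x ^ n := by
      intro x
      set Δ : H := x - x₀ with hΔ
      -- polynomial expressing fful along the line
      set gP : Polynomial k := Polynomial.C (v0⁻¹) *
        ∑ σ : Equiv.Perm (Fin (2 * (2 * n))), Polynomial.C ((Equiv.Perm.sign σ : ℤ) : k) *
          ∏ i : Fin (2 * n),
            (Polynomial.C (τ (ι Q x₀ • b (σ (eIdx i))) (b (σ (oIdx i)))) +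
             Polynomial.C (τ (ι Q Δ • b (σ (eIdx i))) (b (σ (oIdx i)))) * Polynomial.X) with hgP
      have hgeval : ∀ t : k, gP.eval t = fful (x₀ + t • Δ) := by
        intro t
        have hfactor : ∀ (u w : V),
            τ (ι Q (x₀ + t • Δ) • u) w = τ (ι Q x₀ • u) w + τ (ι Q Δ • u) w * t := by
          intro u w
          have e1 : ι Q (x₀ + t • Δ) • u = ι Q x₀ • u + t • (ι Q Δ • u) := by
            rw [map_add, _root_.map_smul (ι Q) t Δ, add_smul]
            congr 1
            exact smul_assoc t (ι Q Δ) u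
          rw [e1, map_add, LinearMap.add_apply]
          congr 1
          rw [_root_.map_smul τ t (ι Q Δ • u), LinearMap.smul_apply, smul_eq_mul]
          ring
        rw [hgP]
        rw [Polynomial.eval_mul, Polynomial.eval_C, Polynomial.eval_finset_sum]
        rw [hffuldef]
        show v0⁻¹ * _ = F (x₀ + t • Δ) * v0⁻¹
        rw [hFdef]
        show v0⁻¹ * _ = Walt (Wb (x₀ + t • Δ)) (2 * n) b * v0⁻¹
        rw [Walt_apply]
        rw [mul_comm]
        congr 1
        refine Finset.sum_congr rfl fun σ _ => ?_
        rw [Polynomial.eval_mul, Polynomial.eval_C, Polynomial.eval_prod]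
        congr 1
        refine Finset.prod_congr rfl fun i _ => ?_
        rw [Polynomial.eval_add, Polynomial.eval_mul, Polynomial.eval_C, Polynomial.eval_C,
          Polynomial.eval_X, hWb, hfactor]
      set pP : Polynomial k := Polynomial.C (Q x₀) +
          Polynomial.C (B x₀ Δ + B Δ x₀) * Polynomial.X +
          Polynomial.C (Q Δ) * Polynomial.X ^ 2 with hpP
      have hpeval : ∀ t : k, pP.eval t = Q (x₀ + t • Δ) := by
        intro t
        have hq1 : Q (x₀ + t • Δ) = B (x₀ + t • Δ) (x₀ + t • Δ) := (hBQ _).symm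
        have eL : B (x₀ + t • Δ) = B x₀ + t • B Δ := by
          rw [map_add, _root_.map_smul]
        have happ : B (x₀ + t • Δ) (x₀ + t • Δ)
            = (B x₀ x₀ + t * B x₀ Δ) + t * (B Δ x₀ + t * B Δ Δ) := by
          rw [eL, LinearMap.add_apply, LinearMap.smul_apply, smul_eq_mul]
          rw [map_add (B x₀), _root_.map_smul (B x₀), smul_eq_mul,
            map_add (B Δ), _root_.map_smul (B Δ), smul_eq_mul]
        rw [hq1, happ, hpP]
        simp only [Polynomial.eval_add, Polynomial.eval_mul, Polynomial.eval_C,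
          Polynomial.eval_X, Polynomial.eval_pow]
        rw [hBQ, hBQ]
        ring
      have hpoly : gP ^ 2 = (Polynomial.C c * pP ^ n) ^ 2 := by
        apply Polynomial.funext
        intro t
        simp only [Polynomial.eval_pow, Polynomial.eval_mul, Polynomial.eval_C]
        rw [hgeval t, hpeval t]
        have h1 := hsqf (x₀ + t • Δ)
        rw [hκc] at h1
        rw [h1]
        rw [show (2 * n) = n * 2 from by ring, pow_mul]
        ring
      have hfac : (gP - Polynomial.C c * pP ^ n) * (gP + Polynomial.C c * pP ^ n) = 0 := by
        linear_combination hpoly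
      have hz1 : (x₀ + (1 : k) • Δ) = x := by
        rw [one_smul, hΔ]
        abel
      rcases mul_eq_zero.mp hfac with h | h
      · have hg : gP = Polynomial.C c * pP ^ n := sub_eq_zero.mp h
        have := congrArg (fun p => Polynomial.eval (1 : k) p) hg
        simp only [Polynomial.eval_mul, Polynomial.eval_C, Polynomial.eval_pow] at this
        rw [hgeval 1, hpeval 1, hz1] at this
        exact this
      · -- degenerate sign case: forces fful x₀ = 0
        have h0 := congrArg (fun p => Polynomial.eval (0 : k) p) h
        simp only [Polynomial.eval_add, Polynomial.eval_mul, Polynomial.eval_C,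
          Polynomial.eval_pow, Polynomial.eval_zero] at h0
        rw [hgeval 0, hpeval 0] at h0
        have hz0 : (x₀ + (0 : k) • Δ) = x₀ := by rw [zero_smul, add_zero]
        rw [hz0] at h0
        have hff0 : fful x₀ = 0 := by
          rw [hcq] at h0
          exact add_self_eq_zero.mp h0
        have hc0 : c = 0 := by
          rw [hcdef, hff0, zero_mul]
        have hgzero : gP = 0 := by
          rw [hc0] at h
          simp only [map_zero, zero_mul, add_zero] at h
          exact h
        have := congrArg (fun p => Polynomial.eval (1 : k) p) hgzero
        simp only [Polynomial.eval_zero] at this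
        rw [hgeval 1, hz1] at this
        rw [this, hc0]
        ring
    -- conclude
    refine ⟨c, fun x ξ => ?_⟩
    rw [wedgePow_congr _ (fun u v => Wb x u v) (2 * n) ξ (fun u v => (hWb x u v).symm),
      wedgePow_eq_Walt, hWxval, hmain x]
    rfl

end Part5
end

section
/- Assume dim_k V = 4n with n ≥ 1. Then for every x ∈ H with x ≠ 0 and Q(x) = 0, the form ω_x has rank 2n; equivalently, the radical {u ∈ V : ω_x(u, v) = 0 for all v ∈ V} has k-dimension 2n. -/
open CliffordAlgebra

/-- Assume `dim_k V = 4n`, `n ≥ 1`.  For every `x ∈ H` with `x ≠ 0` and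
`Q x = 0`, the form `ω_x(u, v) = τ(ι(x)·u, v)` has rank `2n`; equivalently its radical
`{u ∈ V : ω_x(u, v) = 0 ∀ v}` has `k`-dimension `2n`. -/
theorem omega_isotropic_rank
    {k : Type*} [Field k] [CharZero k]
    {H : Type*} [AddCommGroup H] [Module k H] [FiniteDimensional k H]
    (Q : QuadraticForm k H)
    (B : LinearMap.BilinForm k H)
    (hBQ : ∀ x, B x x = Q x)
    (hBsymm : ∀ x y, B x y = B y x)
    (hBnd : LinearMap.BilinForm.Nondegenerate B)
    {V : Type*} [AddCommGroup V] [Module k V] [FiniteDimensional k V]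
    [Module (CliffordAlgebra Q) V] [IsScalarTower k (CliffordAlgebra Q) V]
    (τ : LinearMap.BilinForm k V)
    (hτsymm : ∀ u v : V, τ u v = τ v u)
    (hτnd : LinearMap.BilinForm.Nondegenerate τ)
    (hτinv : ∀ (a : CliffordAlgebra Q) (u v : V),
      τ (a • u) v = τ u (involute (reverse a) • v))
    (n : ℕ) (hn : 1 ≤ n) (hdim : Module.finrank k V = 4 * n)
    (x : H) (hx : x ≠ 0) (hQx : Q x = 0) :
    Module.finrank k
      (LinearMap.ker (τ ∘ₗ DistribMulAction.toLinearMap k V (ι Q x))) = 2 * n := by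
  set f : V →ₗ[k] V := DistribMulAction.toLinearMap k V (ι Q x) with hf
  have hfapp : ∀ u : V, f u = ι Q x • u := fun u => rfl
  -- ker (τ ∘ₗ f) = ker f
  have hker : LinearMap.ker (τ ∘ₗ f) = LinearMap.ker f := by
    ext u
    simp only [LinearMap.mem_ker, LinearMap.comp_apply]
    constructor
    · intro h
      exact hτnd.1 (f u) (fun v => by rw [h]; rfl)
    · intro h; rw [h]; simp
  rw [hker]
  -- choose y with B x y ≠ 0
  obtain ⟨y, hy⟩ : ∃ y, B x y ≠ 0 := by
    by_contra h
    push_neg at h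
    exact hx (hBnd.1 x h)
  set c : k := B x y with hc
  -- polar Q x y = 2 * c
  have hpolar : QuadraticMap.polar Q x y = 2 * c := by
    simp only [QuadraticMap.polar, ← hBQ]
    simp only [map_add, LinearMap.add_apply]
    rw [hBsymm y x]
    ring
  -- f ∘ f = 0
  have hff : ∀ u : V, f (f u) = 0 := by
    intro u
    rw [hfapp, hfapp, smul_smul, ι_sq_scalar, hQx, map_zero, zero_smul]
  -- range f = ker f
  have hrk : LinearMap.range f = LinearMap.ker f := by
    apply le_antisymm
    · rintro _ ⟨u, rfl⟩
      exact hff u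
    · intro u hu
      have hu' : ι Q x • u = 0 := hu
      refine ⟨(2 * c)⁻¹ • (ι Q y • u), ?_⟩
      have h2c : (2 : k) * c ≠ 0 := by
        simp [hy]
      have hxy : ι Q x * ι Q y =
          algebraMap k (CliffordAlgebra Q) (QuadraticMap.polar Q x y) - ι Q y * ι Q x :=
        eq_sub_of_add_eq (ι_mul_ι_add_swap x y)
      have key : (ι Q x * ι Q y) • u = (2 * c) • u := by
        rw [hxy, sub_smul, mul_smul, hu', smul_zero, sub_zero, hpolar, algebraMap_smul]
      rw [hfapp, smul_comm, smul_smul, key, smul_smul, inv_mul_cancel₀ h2c, one_smul]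
  -- dimension count
  have hsum := LinearMap.finrank_range_add_finrank_ker f
  rw [hrk, hdim] at hsum
  omega
end

section
/- For all x, y ∈ H and all p ≥ 0, the operators on alternating forms on V satisfy the commutation relation Λ_x ∘ L_y − L_y ∘ Λ_x = δ_c + B(x, y)·Ξ on A^p, where c = (1/2)·(ι(x)·ι(y) − ι(y)·ι(x)) ∈ C; explicitly, for every η ∈ A^p, Λ_x(ω_y ∧ η) − ω_y ∧ (Λ_x η) = δ_c(η) + B(x, y)·(p − dim_k(V)/2)·η. -/
open CliffordAlgebra

/-- Wedge product of a `2`-form `ω` with a `p`-form `η`, evaluated on a `(p+2)`-tuple: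
`(ω ∧ η)(ξ₁,…,ξ_{p+2}) = Σ_{i<j} (−1)^{i+j−1} ω(ξᵢ, ξⱼ) η(ξ₁,…,ξ̂ᵢ,…,ξ̂ⱼ,…)`
(the sign is written for `0`-based indices). -/
def wedge2 {k V : Type*} [Field k] [AddCommGroup V] [Module k V]
    (ω : V → V → k) {p : ℕ} (η : (Fin p → V) → k) (ξ : Fin (p + 2) → V) : k :=
  ∑ i : Fin (p + 2), ∑ j : Fin (p + 2),
    if h : i < j then
      (-1 : k) ^ ((i : ℕ) + (j : ℕ) + 1) * ω (ξ i) (ξ j) *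
        η (fun t => ξ (j.succAbove
          ((⟨(i : ℕ), by have h' : (i : ℕ) < (j : ℕ) := h; have := j.isLt; omega⟩ :
            Fin (p + 1)).succAbove t)))
    else 0

/-- The operator `Λ` built from the pair of families `dw, xw : Fin m → V`
(`dw` a `τ`-dual basis, `xw α = ι(x)·u_α`):
`(Λ η)(ξ₁,…,ξ_p) := (1/2) Σ_α η(dw α, xw α, ξ₁,…,ξ_p)`. -/
noncomputable def lambdaOp {k V : Type*} [Field k] [AddCommGroup V] [Module k V]
    {m : ℕ} (dw xw : Fin m → V) {p : ℕ}
    (η : (Fin (p + 2) → V) → k) (ξ : Fin p → V) : k :=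
  (2 : k)⁻¹ * ∑ α : Fin m, η (Fin.cons (dw α) (Fin.cons (xw α) ξ))

/-- The derivation `δ_a` of the algebra of forms induced by the action of `a`:
`(δ_a η)(ξ₁,…,ξ_p) := Σ_i η(ξ₁,…,a·ξᵢ,…,ξ_p)`. -/
def deltaOp {k V A : Type*} [Field k] [AddCommGroup V] [Module k V] [SMul A V]
    (a : A) {p : ℕ} (η : (Fin p → V) → k) (ξ : Fin p → V) : k :=
  ∑ i : Fin p, η (Function.update ξ i (a • ξ i))

/-- The composite `L_ω ∘ Λ` on forms of any degree `q`, with the convention `Λ = 0`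
on forms of degree `< 2`. -/
noncomputable def wedgeLambdaOp {k V : Type*} [Field k] [AddCommGroup V] [Module k V]
    (ω : V → V → k) {m : ℕ} (dw xw : Fin m → V) :
    (q : ℕ) → ((Fin q → V) → k) → (Fin q → V) → k
  | 0, _, _ => 0
  | 1, _, _ => 0
  | (_ + 2), η, ξ => wedge2 ω (lambdaOp dw xw η) ξ


section aux
set_option linter.unusedSectionVars false
set_option maxHeartbeats 1000000

variable {k V : Type*} [Field k] [AddCommGroup V] [Module k V]

lemma sa_val {n : ℕ} (pp : Fin (n+1)) (i : Fin n) :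
    ((pp.succAbove i : Fin (n+1)) : ℕ) = if (i:ℕ) < (pp:ℕ) then (i:ℕ) else (i:ℕ)+1 := by
  rcases Nat.lt_or_ge (i:ℕ) (pp:ℕ) with h | h
  · rw [Fin.succAbove_of_castSucc_lt _ _ (by simpa [Fin.lt_def] using h), if_pos h]
    simp
  · rw [Fin.succAbove_of_le_castSucc _ _ (by simpa [Fin.le_def] using h), if_neg (by omega)]
    simp

lemma cons2_val0 {p : ℕ} {a b : V} {ξ : Fin p → V} {w : Fin (p+2)} (h : (w:ℕ) = 0) :
    (Fin.cons a (Fin.cons b ξ) : Fin (p+2) → V) w = a := by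
  have hw : w = 0 := Fin.ext (by simpa using h)
  rw [hw]; rfl

lemma cons2_val1 {p : ℕ} {a b : V} {ξ : Fin p → V} {w : Fin (p+2)} (h : (w:ℕ) = 1) :
    (Fin.cons a (Fin.cons b ξ) : Fin (p+2) → V) w = b := by
  have hw : w = Fin.succ 0 := Fin.ext (by simpa using h)
  rw [hw, Fin.cons_succ]; rfl

lemma cons2_val2 {p : ℕ} {a b : V} {ξ : Fin p → V} {w : Fin (p+2)} {u : Fin p}
    (h : (w:ℕ) = (u:ℕ)+2) : (Fin.cons a (Fin.cons b ξ) : Fin (p+2) → V) w = ξ u := by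
  have hw : w = u.succ.succ := Fin.ext (by simpa using h)
  rw [hw, Fin.cons_succ, Fin.cons_succ]

lemma sign_smul_eq {p : ℕ} (s : Fin p) (c : k) :
    (Equiv.Perm.sign (Fin.cycleRange s)) • c = (-1:k)^(s:ℕ) * c := by
  rw [Fin.sign_cycleRange]
  rcases Int.units_eq_one_or ((-1 : ℤˣ)^(s:ℕ)) with h | h <;> rw [h]
  · have h2 : ((-1:ℤ))^(s:ℕ) = 1 := by
      have := congrArg (Units.val) h; push_cast at this; simpa using this
    have h3 : ((-1:k))^(s:ℕ) = 1 := by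
      calc ((-1:k))^(s:ℕ) = (((-1:ℤ)^(s:ℕ) : ℤ) : k) := by push_cast; ring
        _ = 1 := by rw [h2]; norm_num
    simp [h3]
  · have h2 : ((-1:ℤ))^(s:ℕ) = -1 := by
      have := congrArg (Units.val) h; push_cast at this; simpa using this
    have h3 : ((-1:k))^(s:ℕ) = -1 := by
      calc ((-1:k))^(s:ℕ) = (((-1:ℤ)^(s:ℕ) : ℤ) : k) := by push_cast; ring
        _ = -1 := by rw [h2]; norm_num
    simp [h3]

/-- case i = 0, j = s+2 -/
lemma eta_arg0 {p : ℕ} (η : AlternatingMap k V k (Fin p)) (a b : V) (ξ : Fin p → V) (s : Fin p) :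
    η (fun t => (Fin.cons a (Fin.cons b ξ) : Fin (p+2) → V) (s.succ.succ.succAbove t.succ))
      = (-1:k)^(s:ℕ) * η (Function.update ξ s b) := by
  rcases p with _ | p
  · exact s.elim0
  have hσ : ∀ u, (fun t => (Fin.cons a (Fin.cons b ξ) : Fin (p+3) → V)
      (s.succ.succ.succAbove t.succ)) (s.cycleRange u) = Function.update ξ s b u := by
    intro u
    rcases lt_trichotomy u s with h | h | h
    · have hv : ((s.cycleRange u : Fin (p+1)) : ℕ) = (u:ℕ) + 1 := Fin.coe_cycleRange_of_lt h
      rw [Function.update_of_ne (ne_of_lt h)]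
      refine cons2_val2 ?_
      rw [sa_val]
      have hs : (u:ℕ) < (s:ℕ) := h
      simp only [Fin.val_succ, hv]
      split_ifs <;> omega
    · subst h
      rw [Fin.cycleRange_self, Function.update_self]
      refine cons2_val1 ?_
      rw [sa_val]
      split_ifs <;> simp only [Fin.val_succ, Fin.val_zero] at * <;> omega
    · rw [Fin.cycleRange_of_gt h, Function.update_of_ne (ne_of_gt h)]
      refine cons2_val2 ?_
      rw [sa_val]
      have hs : (s:ℕ) < (u:ℕ) := h
      simp only [Fin.val_succ]
      split_ifs <;> omega
  have hFU : (fun t => (Fin.cons a (Fin.cons b ξ) : Fin (p+3) → V)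
      (s.succ.succ.succAbove t.succ)) = (Function.update ξ s b) ∘ ⇑(s.cycleRange).symm := by
    funext u
    rw [Function.comp_apply, ← hσ ((s.cycleRange).symm u), Equiv.apply_symm_apply]
  rw [hFU, AlternatingMap.map_perm, Equiv.Perm.sign_symm, sign_smul_eq]

/-- case i = 1, j = s+2 -/
lemma eta_arg1 {p : ℕ} (η : AlternatingMap k V k (Fin p)) (a b : V) (ξ : Fin p → V) (s : Fin p)
    (h1 : 1 < p + 1) :
    η (fun t => (Fin.cons a (Fin.cons b ξ) : Fin (p+2) → V)
        (s.succ.succ.succAbove ((⟨1, h1⟩ : Fin (p+1)).succAbove t)))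
      = (-1:k)^(s:ℕ) * η (Function.update ξ s a) := by
  rcases p with _ | p
  · exact s.elim0
  have hσ : ∀ u, (fun t => (Fin.cons a (Fin.cons b ξ) : Fin (p+3) → V)
      (s.succ.succ.succAbove ((⟨1, h1⟩ : Fin (p+2)).succAbove t))) (s.cycleRange u)
      = Function.update ξ s a u := by
    intro u
    rcases lt_trichotomy u s with h | h | h
    · have hv : ((s.cycleRange u : Fin (p+1)) : ℕ) = (u:ℕ) + 1 := Fin.coe_cycleRange_of_lt h
      rw [Function.update_of_ne (ne_of_lt h)]
      refine cons2_val2 ?_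
      rw [sa_val, sa_val]
      have hs : (u:ℕ) < (s:ℕ) := h
      simp only [Fin.val_succ, hv, Fin.val_one]
      split_ifs <;> omega
    · subst h
      rw [Fin.cycleRange_self, Function.update_self]
      refine cons2_val0 ?_
      rw [sa_val, sa_val]
      split_ifs <;> simp only [Fin.val_succ, Fin.val_zero, Fin.val_one, Fin.val_mk] at * <;> omega
    · rw [Fin.cycleRange_of_gt h, Function.update_of_ne (ne_of_gt h)]
      refine cons2_val2 ?_
      rw [sa_val, sa_val]
      have hs : (s:ℕ) < (u:ℕ) := h
      simp only [Fin.val_succ, Fin.val_one]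
      split_ifs <;> omega
  have hFU : (fun t => (Fin.cons a (Fin.cons b ξ) : Fin (p+3) → V)
      (s.succ.succ.succAbove ((⟨1, h1⟩ : Fin (p+2)).succAbove t)))
      = (Function.update ξ s a) ∘ ⇑(s.cycleRange).symm := by
    funext u
    rw [Function.comp_apply, ← hσ ((s.cycleRange).symm u), Equiv.apply_symm_apply]
  rw [hFU, AlternatingMap.map_perm, Equiv.Perm.sign_symm, sign_smul_eq]

/-- case (0,1) tuple -/
lemma eta_arg01 {p : ℕ} (a b : V) (ξ : Fin p → V) :
    (fun t : Fin p => (Fin.cons a (Fin.cons b ξ) : Fin (p+2) → V)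
        ((Fin.succ (0 : Fin (p+1))).succAbove t.succ)) = ξ := by
  funext t
  refine cons2_val2 ?_
  rw [sa_val]
  split_ifs <;> simp only [Fin.val_succ, Fin.val_zero] at * <;> omega

/-- case i = r+2, j = s+2 tuple -/
lemma trs {q : ℕ} (a b : V) (ξ : Fin (q+2) → V) (r s : Fin (q+2)) (hrs : (r:ℕ) < (s:ℕ))
    (h2 : (r:ℕ)+1+1 < q+2+1) (h3 : (r:ℕ) < q+1) :
    (fun t : Fin (q+2) => (Fin.cons a (Fin.cons b ξ) : Fin (q+4) → V)
        (s.succ.succ.succAbove ((⟨(r:ℕ)+1+1, h2⟩ : Fin (q+3)).succAbove t)))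
    = (Fin.cons a (Fin.cons b (fun u : Fin q =>
        ξ (s.succAbove ((⟨(r:ℕ), h3⟩ : Fin (q+1)).succAbove u)))) : Fin (q+2) → V) := by
  have hrv : (r:ℕ) < (s:ℕ) := hrs
  have hsv : (s:ℕ) < q+2 := s.isLt
  funext t
  by_cases ht0 : (t:ℕ) = 0
  · rw [cons2_val0 (a := a) (by rw [sa_val, sa_val]; simp only [Fin.val_succ, ht0]; split_ifs <;> omega)]
    rw [cons2_val0 ht0]
  by_cases ht1 : (t:ℕ) = 1
  · rw [cons2_val1 (b := b) (by rw [sa_val, sa_val]; simp only [Fin.val_succ, ht1]; split_ifs <;> omega)]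
    rw [cons2_val1 ht1]
  · have htv : 2 ≤ (t:ℕ) := by omega
    have htlt : (t:ℕ) < q+2 := t.isLt
    set u : Fin q := ⟨(t:ℕ)-2, by omega⟩ with hu
    rw [cons2_val2 (u := s.succAbove ((⟨(r:ℕ), h3⟩ : Fin (q+1)).succAbove u)) (by
      rw [sa_val, sa_val, sa_val, sa_val]
      simp only [Fin.val_succ, hu]
      split_ifs <;> omega)]
    rw [cons2_val2 (u := u) (by simp only [hu]; omega)]

/-- full expansion of the wedge of a 2-form with an alternating p-form on a cons-cons tuple -/
lemma wedge2_cons_cons {p : ℕ} (ω : V → V → k) (η : AlternatingMap k V k (Fin p))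
    (a b : V) (ξ : Fin p → V) :
    wedge2 ω (⇑η) (Fin.cons a (Fin.cons b ξ)) =
      ω a b * η ξ
      - (∑ s : Fin p, ω a (ξ s) * η (Function.update ξ s b))
      + (∑ s : Fin p, ω b (ξ s) * η (Function.update ξ s a))
      + ∑ r : Fin p, ∑ s : Fin p, (if h : (r:ℕ) < (s:ℕ) then
          (-1:k)^((r:ℕ)+(s:ℕ)+1) * ω (ξ r) (ξ s) *
            η (fun t => (Fin.cons a (Fin.cons b ξ) : Fin (p+2) → V)
              (s.succ.succ.succAbove
                ((⟨(r:ℕ)+1+1, by have := s.isLt; omega⟩ : Fin (p+1)).succAbove t)))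
        else 0) := by
  rw [wedge2]
  simp only [Fin.sum_univ_succ, Fin.isValue, Fin.cons_zero, Fin.cons_succ, Fin.lt_def,
    Fin.val_succ, Fin.val_zero, lt_self_iff_false, dite_false, Nat.zero_lt_succ, dite_true,
    Nat.not_lt_zero, Nat.succ_lt_succ_iff, Nat.zero_add, Nat.add_zero, zero_add, add_zero,
    Nat.lt_irrefl, Finset.sum_const_zero, Fin.mk_zero, Fin.zero_succAbove]
  rw [eta_arg01]
  have h0 : ∀ s : Fin p,
      (-1:k) ^ ((s:ℕ)+1+1+1) * ω a (ξ s) *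
        η (fun t => (Fin.cons a (Fin.cons b ξ) : Fin (p+2) → V) (s.succ.succ.succAbove t.succ))
      = -(ω a (ξ s) * η (Function.update ξ s b)) := by
    intro s
    rw [eta_arg0]
    have hh : (-1:k)^((s:ℕ)+1+1+1) * (-1:k)^(s:ℕ) = -1 := by
      rw [← pow_add, show (s:ℕ)+1+1+1+(s:ℕ) = 2*(s:ℕ)+3 from by ring, pow_add, pow_mul]
      norm_num
    calc (-1:k)^((s:ℕ)+1+1+1) * ω a (ξ s) * ((-1:k)^(s:ℕ) * η (Function.update ξ s b))
        = ((-1:k)^((s:ℕ)+1+1+1) * (-1:k)^(s:ℕ)) * (ω a (ξ s) * η (Function.update ξ s b)) := by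
          ring
      _ = -(ω a (ξ s) * η (Function.update ξ s b)) := by rw [hh]; ring
  have h1 : ∀ s : Fin p,
      (-1:k) ^ (1+((s:ℕ)+1+1)+1) * ω b (ξ s) *
        η (fun t => (Fin.cons a (Fin.cons b ξ) : Fin (p+2) → V)
          (s.succ.succ.succAbove ((⟨1, by have := s.isLt; omega⟩ : Fin (p+1)).succAbove t)))
      = ω b (ξ s) * η (Function.update ξ s a) := by
    intro s
    rw [eta_arg1 η a b ξ s (by have := s.isLt; omega)]
    have hh : (-1:k)^(1+((s:ℕ)+1+1)+1) * (-1:k)^(s:ℕ) = 1 := by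
      rw [← pow_add, show 1+((s:ℕ)+1+1)+1+(s:ℕ) = 2*(s:ℕ)+4 from by ring, pow_add, pow_mul]
      norm_num
    calc (-1:k)^(1+((s:ℕ)+1+1)+1) * ω b (ξ s) * ((-1:k)^(s:ℕ) * η (Function.update ξ s a))
        = ((-1:k)^(1+((s:ℕ)+1+1)+1) * (-1:k)^(s:ℕ)) * (ω b (ξ s) * η (Function.update ξ s a)) := by
          ring
      _ = ω b (ξ s) * η (Function.update ξ s a) := by rw [hh]; ring
  have h2 : ∀ r s : Fin p,
      (if h : (r:ℕ) < (s:ℕ) then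
        (-1:k)^((r:ℕ)+1+1+((s:ℕ)+1+1)+1) * ω (ξ r) (ξ s) *
          η (fun t => (Fin.cons a (Fin.cons b ξ) : Fin (p+2) → V)
            (s.succ.succ.succAbove
              ((⟨(r:ℕ)+1+1, by have h' := h; have := s.isLt; omega⟩ : Fin (p+1)).succAbove t)))
      else 0)
      = (if h : (r:ℕ) < (s:ℕ) then
          (-1:k)^((r:ℕ)+(s:ℕ)+1) * ω (ξ r) (ξ s) *
            η (fun t => (Fin.cons a (Fin.cons b ξ) : Fin (p+2) → V)
              (s.succ.succ.succAbove
                ((⟨(r:ℕ)+1+1, by have := s.isLt; omega⟩ : Fin (p+1)).succAbove t)))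
        else 0) := by
    intro r s
    by_cases h : (r:ℕ) < (s:ℕ)
    · rw [dif_pos h, dif_pos h,
        show ((r:ℕ)+1+1+((s:ℕ)+1+1)+1) = ((r:ℕ)+(s:ℕ)+1)+4 from by ring, pow_add]
      norm_num
    · rw [dif_neg h, dif_neg h]
  calc _ = ((-1:k) ^ (1+1) * ω a b * η ξ
        + ∑ s : Fin p, (-1:k) ^ ((s:ℕ)+1+1+1) * ω a (ξ s) *
            η (fun t => (Fin.cons a (Fin.cons b ξ) : Fin (p+2) → V) (s.succ.succ.succAbove t.succ)))
      + ((∑ s : Fin p, (-1:k) ^ (1+((s:ℕ)+1+1)+1) * ω b (ξ s) *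
            η (fun t => (Fin.cons a (Fin.cons b ξ) : Fin (p+2) → V)
              (s.succ.succ.succAbove ((⟨1, by have := s.isLt; omega⟩ : Fin (p+1)).succAbove t))))
        + ∑ r : Fin p, ∑ s : Fin p, (if h : (r:ℕ) < (s:ℕ) then
            (-1:k)^((r:ℕ)+1+1+((s:ℕ)+1+1)+1) * ω (ξ r) (ξ s) *
              η (fun t => (Fin.cons a (Fin.cons b ξ) : Fin (p+2) → V)
                (s.succ.succ.succAbove
                  ((⟨(r:ℕ)+1+1, by have h' := h; have := s.isLt; omega⟩ : Fin (p+1)).succAbove t)))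
          else 0)) := by norm_num
    _ = _ := by
      rw [Finset.sum_congr rfl (fun s _ => h0 s), Finset.sum_congr rfl (fun s _ => h1 s),
        Finset.sum_congr rfl (fun r _ => Finset.sum_congr rfl (fun s _ => h2 r s))]
      rw [Finset.sum_neg_distrib]
      norm_num
      ring

/-- matching the quadratic remainder with `wedgeLambdaOp` -/
lemma R_eq_wedgeLambda {m p : ℕ} (ω : V → V → k) (dw xw : Fin m → V)
    (η : AlternatingMap k V k (Fin p)) (ξ : Fin p → V) :
    (2:k)⁻¹ * ∑ α : Fin m, ∑ r : Fin p, ∑ s : Fin p, (if h : (r:ℕ) < (s:ℕ) then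
        (-1:k)^((r:ℕ)+(s:ℕ)+1) * ω (ξ r) (ξ s) *
          η (fun t => (Fin.cons (dw α) (Fin.cons (xw α) ξ) : Fin (p+2) → V)
            (s.succ.succ.succAbove
              ((⟨(r:ℕ)+1+1, by have := s.isLt; omega⟩ : Fin (p+1)).succAbove t)))
      else 0)
    = wedgeLambdaOp ω dw xw p (⇑η) ξ := by
  match p, η, ξ with
  | 0, η, ξ =>
    show _ = (0:k)
    simp
  | 1, η, ξ =>
    show _ = (0:k)
    have hz : ∀ α : Fin m, (∑ r : Fin 1, ∑ s : Fin 1, (if h : (r:ℕ) < (s:ℕ) then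
        (-1:k)^((r:ℕ)+(s:ℕ)+1) * ω (ξ r) (ξ s) *
          η (fun t => (Fin.cons (dw α) (Fin.cons (xw α) ξ) : Fin 3 → V)
            (s.succ.succ.succAbove
              ((⟨(r:ℕ)+1+1, by have := s.isLt; omega⟩ : Fin 2).succAbove t)))
      else 0)) = 0 := by
      intro α
      refine Finset.sum_eq_zero (fun r _ => Finset.sum_eq_zero (fun s _ => ?_))
      exact dif_neg (by omega)
    rw [Finset.sum_congr rfl (fun α _ => hz α)]
    simp
  | (q+2), η, ξ =>
    show _ = wedge2 ω (lambdaOp dw xw ⇑η) ξ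
    rw [wedge2]
    simp only [lambdaOp, Fin.lt_def]
    have step1 : ∀ r s : Fin (q+2), (if h : (r:ℕ) < (s:ℕ) then
          (-1:k)^((r:ℕ)+(s:ℕ)+1) * ω (ξ r) (ξ s) *
            ((2:k)⁻¹ * ∑ α : Fin m, η (Fin.cons (dw α) (Fin.cons (xw α)
              (fun u => ξ (s.succAbove
                ((⟨(r:ℕ), by have h' : (r:ℕ) < (s:ℕ) := h; have := s.isLt; omega⟩ :
                  Fin (q+1)).succAbove u))))))
        else 0)
        = (2:k)⁻¹ * ∑ α : Fin m, (if h : (r:ℕ) < (s:ℕ) then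
            (-1:k)^((r:ℕ)+(s:ℕ)+1) * ω (ξ r) (ξ s) *
              η (fun t => (Fin.cons (dw α) (Fin.cons (xw α) ξ) : Fin (q+4) → V)
                (s.succ.succ.succAbove
                  ((⟨(r:ℕ)+1+1, by have := s.isLt; omega⟩ : Fin (q+3)).succAbove t)))
          else 0) := by
      intro r s
      by_cases h : (r:ℕ) < (s:ℕ)
      · rw [dif_pos h]
        rw [Finset.sum_congr rfl (fun α _ => dif_pos h)]
        rw [Finset.sum_congr rfl (fun α _ => by
          rw [← trs (dw α) (xw α) ξ r s h (by have := s.isLt; omega) (by have := s.isLt; omega)])]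
        rw [mul_left_comm, Finset.mul_sum, Finset.mul_sum]
      · rw [dif_neg h]
        rw [Finset.sum_congr rfl (fun α _ => dif_neg h)]
        simp
    rw [Finset.sum_congr rfl (fun r _ => Finset.sum_congr rfl (fun s _ => step1 r s))]
    rw [Finset.sum_congr rfl (fun r _ => (Finset.mul_sum _ _ _).symm), ← Finset.mul_sum]
    congr 1
    rw [Finset.sum_comm]
    exact Finset.sum_congr rfl (fun α _ => Finset.sum_comm)

end aux

/-- For all `x, y ∈ H` and all `p ≥ 0`, on alternating `p`-forms one has
`Λ_x ∘ L_y − L_y ∘ Λ_x = δ_c + B(x,y)·Ξ`, where `c = (1/2)(ι x · ι y − ι y · ι x) ∈ C` and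
`Ξ` acts on `A^p` by `p − dim_k(V)/2`. -/
theorem lambda_L_commutator
    {k : Type*} [Field k] [CharZero k]
    {H : Type*} [AddCommGroup H] [Module k H] [FiniteDimensional k H]
    (Q : QuadraticForm k H)
    (B : LinearMap.BilinForm k H)
    (hBQ : ∀ x, B x x = Q x)
    (hBsymm : ∀ x y, B x y = B y x)
    (hBnd : LinearMap.BilinForm.Nondegenerate B)
    {V : Type*} [AddCommGroup V] [Module k V] [FiniteDimensional k V]
    [Module (CliffordAlgebra Q) V] [IsScalarTower k (CliffordAlgebra Q) V]
    (τ : LinearMap.BilinForm k V)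
    (hτsymm : ∀ u v : V, τ u v = τ v u)
    (hτnd : LinearMap.BilinForm.Nondegenerate τ)
    (hτinv : ∀ (a : CliffordAlgebra Q) (u v : V),
      τ (a • u) v = τ u (involute (reverse a) • v))
    {m : ℕ} (b : Module.Basis (Fin m) k V) (d : Fin m → V)
    (hd : ∀ α β : Fin m, τ (d α) (b β) = if α = β then 1 else 0)
    (x y : H) (p : ℕ) (η : AlternatingMap k V k (Fin p)) (ξ : Fin p → V) :
    lambdaOp d (fun α => ι Q x • b α)
        (wedge2 (fun u v => τ (ι Q y • u) v) (⇑η)) ξ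
      - wedgeLambdaOp (fun u v => τ (ι Q y • u) v) d (fun α => ι Q x • b α) p (⇑η) ξ
      = deltaOp ((2 : k)⁻¹ • (ι Q x * ι Q y - ι Q y * ι Q x)) (⇑η) ξ
        + B x y * ((p : k) - (Module.finrank k V : k) / 2) * η ξ := by
  classical
  set ω : V → V → k := fun u v => τ (ι Q y • u) v with hω
  set xw : Fin m → V := fun α => ι Q x • b α with hxw
  -- infrastructure
  have scomm : ∀ (c : k) (A : CliffordAlgebra Q) (v : V), c • (A • v) = A • (c • v) :=
    fun c A v => smul_comm c A v
  have repr_eq : ∀ (v : V) (α : Fin m), τ (d α) v = b.repr v α := by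
    intro v α
    conv_lhs => rw [← b.sum_repr v]
    rw [map_sum]
    rw [Finset.sum_congr rfl (fun β _ => by rw [map_smul, smul_eq_mul, hd α β])]
    simp [Finset.sum_ite_eq]
  have E1 : ∀ v : V, ∑ α, τ (d α) v • b α = v := by
    intro v
    conv_rhs => rw [← b.sum_repr v]
    exact Finset.sum_congr rfl (fun α _ => by rw [repr_eq])
  have E2 : ∀ v : V, ∑ α, τ v (b α) • d α = v := by
    intro v
    have key : ∀ w : V, τ (v - ∑ α, τ v (b α) • d α) w = 0 := by
      intro w
      have hw := E1 w
      calc τ (v - ∑ α, τ v (b α) • d α) w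
          = τ (v - ∑ α, τ v (b α) • d α) (∑ β, τ (d β) w • b β) := by rw [hw]
        _ = ∑ β, τ (d β) w * τ (v - ∑ α, τ v (b α) • d α) (b β) := by
            rw [map_sum]
            exact Finset.sum_congr rfl (fun β _ => by rw [map_smul, smul_eq_mul])
        _ = 0 := by
            refine Finset.sum_eq_zero (fun β _ => ?_)
            have hz : τ (v - ∑ α, τ v (b α) • d α) (b β) = 0 := by
              rw [map_sub, LinearMap.sub_apply]
              rw [map_sum, LinearMap.sum_apply]
              rw [Finset.sum_congr rfl (fun α _ => by
                rw [LinearMap.map_smul, LinearMap.smul_apply, smul_eq_mul, hd α β])]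
              simp [Finset.sum_ite_eq', hτsymm v (b β)]
            rw [hz, mul_zero]
    have hz := hτnd.1 _ (fun w => key w)
    rw [sub_eq_zero] at hz
    exact hz.symm
  have conj_y : ∀ (u v : V), τ (ι Q y • u) v = -τ u (ι Q y • v) := by
    intro u v
    rw [hτinv, reverse_ι, involute_ι, neg_smul, map_neg]
  have conj_yx : ∀ (u v : V), τ ((ι Q y * ι Q x) • u) v = τ u ((ι Q x * ι Q y) • v) := by
    intro u v
    rw [hτinv]
    congr 2
    rw [reverse.map_mul, reverse_ι, reverse_ι, map_mul, involute_ι, involute_ι, neg_mul_neg]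
  have hpolar : ι Q x * ι Q y + ι Q y * ι Q x = algebraMap k (CliffordAlgebra Q) (2 * B x y) := by
    rw [ι_mul_ι_add_swap]
    congr 1
    simp only [QuadraticMap.polar, ← hBQ, map_add, LinearMap.add_apply]
    rw [hBsymm y x]; ring
  have cyc : ∀ A A' : CliffordAlgebra Q,
      ∑ α, τ (d α) ((A * A') • b α) = ∑ α, τ (d α) ((A' * A) • b α) := by
    have expand : ∀ A A' : CliffordAlgebra Q,
        ∑ α, τ (d α) ((A * A') • b α)
          = ∑ α, ∑ β, τ (d β) (A' • b α) * τ (d α) (A • b β) := by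
      intro A A'
      refine Finset.sum_congr rfl (fun α _ => ?_)
      conv_lhs => rw [mul_smul, ← E1 (A' • b α)]
      rw [Finset.smul_sum, map_sum]
      refine Finset.sum_congr rfl (fun β _ => ?_)
      rw [← scomm, map_smul, smul_eq_mul]
    intro A A'
    rw [expand A A', expand A' A, Finset.sum_comm]
    exact Finset.sum_congr rfl (fun α _ => Finset.sum_congr rfl (fun β _ => mul_comm _ _))
  have T0 : ∑ α, τ (d α) ((ι Q y * ι Q x) • b α) = B x y * m := by
    have hsum : (∑ α, τ (d α) ((ι Q y * ι Q x) • b α))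
        + (∑ α, τ (d α) ((ι Q x * ι Q y) • b α)) = 2 * B x y * m := by
      rw [← Finset.sum_add_distrib]
      rw [Finset.sum_congr rfl (fun α _ => by
        rw [← map_add, ← add_smul, add_comm (ι Q y * ι Q x), hpolar,
          IsScalarTower.algebraMap_smul, map_smul, smul_eq_mul, hd α α])]
      simp [mul_assoc]
      ring
    have hc := cyc (ι Q y) (ι Q x)
    rw [← hc] at hsum
    linear_combination hsum / 2
  -- linearity in one slot
  have lin : ∀ (s : Fin p) (c : Fin m → k) (w : Fin m → V),
      ∑ α, c α * η (Function.update ξ s (w α))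
        = η (Function.update ξ s (∑ α, c α • w α)) := by
    intro s c w
    let L : V →ₗ[k] k :=
      { toFun := fun v => η (Function.update ξ s v)
        map_add' := fun v1 v2 => η.map_update_add ξ s v1 v2
        map_smul' := fun r v => η.map_update_smul ξ s r v }
    calc ∑ α, c α * η (Function.update ξ s (w α)) = ∑ α, L (c α • w α) := by
          refine Finset.sum_congr rfl (fun α _ => ?_)
          rw [map_smul, smul_eq_mul]
          rfl
      _ = L (∑ α, c α • w α) := (map_sum L _ _).symm
      _ = η (Function.update ξ s (∑ α, c α • w α)) := rfl
  set S : k := ∑ s : Fin p, η (Function.update ξ s ((ι Q x * ι Q y) • ξ s)) with hS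
  -- term computations
  have hT1 : ∑ α, ω (d α) (xw α) = -(B x y * m) := by
    rw [Finset.sum_congr rfl (fun α _ => by
      show τ (ι Q y • d α) (ι Q x • b α) = -τ (d α) ((ι Q y * ι Q x) • b α)
      rw [conj_y, ← mul_smul])]
    rw [Finset.sum_neg_distrib, T0]
  have hT2 : ∑ α, ∑ s, ω (d α) (ξ s) * η (Function.update ξ s (xw α)) = -S := by
    rw [Finset.sum_comm]
    have hs : ∀ s : Fin p, ∑ α, ω (d α) (ξ s) * η (Function.update ξ s (xw α))
        = -η (Function.update ξ s ((ι Q x * ι Q y) • ξ s)) := by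
      intro s
      have step : ∑ α, ω (d α) (ξ s) * η (Function.update ξ s (xw α))
          = ∑ α, (-(τ (d α) (ι Q y • ξ s))) * η (Function.update ξ s (ι Q x • b α)) := by
        refine Finset.sum_congr rfl (fun α _ => ?_)
        show τ (ι Q y • d α) (ξ s) * _ = _
        rw [conj_y]
      rw [step, lin s _ _]
      have hvec : (∑ α, (-(τ (d α) (ι Q y • ξ s))) • (ι Q x • b α))
          = -((ι Q x * ι Q y) • ξ s) := by
        simp only [neg_smul]
        rw [Finset.sum_neg_distrib]
        congr 1
        rw [Finset.sum_congr rfl (fun α _ => scomm _ _ _), ← Finset.smul_sum, E1, mul_smul]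
      rw [hvec, AlternatingMap.map_update_neg]
    rw [Finset.sum_congr rfl (fun s _ => hs s), Finset.sum_neg_distrib, hS]
  have hT3 : ∑ α, ∑ s, ω (xw α) (ξ s) * η (Function.update ξ s (d α)) = S := by
    rw [Finset.sum_comm]
    have hs : ∀ s : Fin p, ∑ α, ω (xw α) (ξ s) * η (Function.update ξ s (d α))
        = η (Function.update ξ s ((ι Q x * ι Q y) • ξ s)) := by
      intro s
      have step : ∑ α, ω (xw α) (ξ s) * η (Function.update ξ s (d α))
          = ∑ α, (τ ((ι Q x * ι Q y) • ξ s) (b α)) * η (Function.update ξ s (d α)) := by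
        refine Finset.sum_congr rfl (fun α _ => ?_)
        show τ (ι Q y • (ι Q x • b α)) (ξ s) * _ = _
        rw [← mul_smul, conj_yx, hτsymm]
      rw [step, lin s _ _, E2]
    rw [Finset.sum_congr rfl (fun s _ => hs s), hS]
  -- delta computation
  have hcv : ∀ v : V, ((2:k)⁻¹ • (ι Q x * ι Q y - ι Q y * ι Q x)) • v
      = (ι Q x * ι Q y) • v - (B x y) • v := by
    intro v
    have h1 : ι Q y * ι Q x = algebraMap k (CliffordAlgebra Q) (2 * B x y) - ι Q x * ι Q y := by
      rw [← hpolar]; abel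
    rw [smul_assoc, sub_smul, h1, sub_smul, algebraMap_smul]
    have h2 : (ι Q x * ι Q y) • v - ((2 * B x y) • v - (ι Q x * ι Q y) • v)
        = (2:k) • ((ι Q x * ι Q y) • v) - (2 * B x y) • v := by
      rw [two_smul]; abel
    rw [h2, smul_sub, smul_smul, smul_smul]
    norm_num
    rw [show (1/2 * (2 * B x y) : k) = B x y from by ring]
  have hδ : deltaOp ((2 : k)⁻¹ • (ι Q x * ι Q y - ι Q y * ι Q x)) (⇑η) ξ
      = S - (p:k) * (B x y * η ξ) := by
    rw [deltaOp]
    rw [Finset.sum_congr rfl (fun i _ => by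
      rw [hcv (ξ i), AlternatingMap.map_update_sub, AlternatingMap.map_update_smul,
        Function.update_eq_self, smul_eq_mul])]
    rw [Finset.sum_sub_distrib, ← hS, Finset.sum_const, Finset.card_univ, Fintype.card_fin,
      nsmul_eq_mul]
  have hm : ((Module.finrank k V : ℕ) : k) = (m:k) := by
    rw [Module.finrank_eq_card_basis b, Fintype.card_fin]
  -- key expansion
  have hkey : lambdaOp d xw (wedge2 ω ⇑η) ξ
      = (2:k)⁻¹ * ((∑ α, ω (d α) (xw α)) * η ξ
          - (∑ α, ∑ s, ω (d α) (ξ s) * η (Function.update ξ s (xw α)))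
          + (∑ α, ∑ s, ω (xw α) (ξ s) * η (Function.update ξ s (d α)))
          + ∑ α : Fin m, ∑ r : Fin p, ∑ s : Fin p, (if h : (r:ℕ) < (s:ℕ) then
              (-1:k)^((r:ℕ)+(s:ℕ)+1) * ω (ξ r) (ξ s) *
                η (fun t => (Fin.cons (d α) (Fin.cons (xw α) ξ) : Fin (p+2) → V)
                  (s.succ.succ.succAbove
                    ((⟨(r:ℕ)+1+1, by have := s.isLt; omega⟩ : Fin (p+1)).succAbove t)))
            else 0)) := by
    rw [lambdaOp]
    rw [Finset.sum_congr rfl (fun α _ => wedge2_cons_cons ω η (d α) (xw α) ξ)]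
    rw [Finset.sum_add_distrib, Finset.sum_add_distrib, Finset.sum_sub_distrib,
      ← Finset.sum_mul]
  have hR := R_eq_wedgeLambda ω d xw η ξ
  rw [hkey, hT1, hT2, hT3, hδ, hm]
  linear_combination hR
end
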